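/- arXiv:1112.1632 — 7 statements merged into one kernel-verified Lean document; each statement's English description precedes it below -/
import Mathlib

section
/- Let H be a Krein space with fundamental symmetry J, let M₊ be a maximal uniformly J-positive subspace and M₋ a maximal uniformly J-negative subspace of H. Let I₊ and I₋ be disjoint index sets, let F₊ = (f_i)_{i∈I₊} be a frame for the Hilbert space (M₊, [·,·]) and F₋ = (f_i)_{i∈I₋} a frame for the Hilbert space (M₋, −[·,·]). Then the combined family F = (f_i)_{i∈I₊∪I₋} is a J-frame for H. -/
/- Frames for Krein spaces ("J-frames"), following Giribet–Maestripieri–Martínez Pería–Massey.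

A Krein space is modelled as a complex Hilbert space `H` together with a fundamental symmetry
`J : H →L[ℂ] H` (selfadjoint, `J ∘L J = 1`); the indefinite inner product is `[x,y] = ⟪J x, y⟫`. -/

noncomputable section

open scoped ComplexInnerProductSpace ComplexOrder
open ContinuousLinearMap

attribute [local instance] Classical.propDecidable

namespace KreinFrames

universe u

variable {H : Type*} [NormedAddCommGroup H] [InnerProductSpace ℂ H]

/-- A subspace `M` is uniformly `J`-positive: `[x,x] ≥ α‖x‖²` on `M` for some `α > 0`. -/
def UnifJPos (J : H →L[ℂ] H) (M : Submodule ℂ H) : Prop :=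
  ∃ α : ℝ, 0 < α ∧ ∀ x ∈ M, α * ‖x‖ ^ 2 ≤ (⟪J x, x⟫).re

/-- A subspace `M` is uniformly `J`-negative: `[x,x] ≤ -α‖x‖²` on `M` for some `α > 0`. -/
def UnifJNeg (J : H →L[ℂ] H) (M : Submodule ℂ H) : Prop :=
  ∃ α : ℝ, 0 < α ∧ ∀ x ∈ M, (⟪J x, x⟫).re ≤ -(α * ‖x‖ ^ 2)

/-- Maximal uniformly `J`-positive subspace. -/
def MaxUnifJPos (J : H →L[ℂ] H) (M : Submodule ℂ H) : Prop :=
  UnifJPos J M ∧ ∀ M' : Submodule ℂ H, UnifJPos J M' → M ≤ M' → M' = M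

/-- Maximal uniformly `J`-negative subspace. -/
def MaxUnifJNeg (J : H →L[ℂ] H) (M : Submodule ℂ H) : Prop :=
  UnifJNeg J M ∧ ∀ M' : Submodule ℂ H, UnifJNeg J M' → M ≤ M' → M' = M

/-- The `J`-orthogonal companion `M^{[⊥]} = {x | [x,m] = 0 ∀ m ∈ M}` of a subspace `M`. -/
def Jorth (J : H →L[ℂ] H) (M : Submodule ℂ H) : Submodule ℂ H where
  carrier := {x | ∀ m ∈ M, ⟪J x, m⟫ = 0}
  zero_mem' := by intro m _; simp
  add_mem' := by
    intro a b ha hb m hm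
    rw [map_add, inner_add_left, ha m hm, hb m hm, add_zero]
  smul_mem' := by
    intro c x hx m hm
    rw [map_smul, inner_smul_left, hx m hm, mul_zero]

/-- `T : ℓ²(I) → H` is the synthesis operator of the family `f`, i.e. `T e_i = f_i`. -/
def IsSynthesis {I : Type*} (f : I → H) (T : lp (fun _ : I => ℂ) 2 →L[ℂ] H) : Prop :=
  ∀ i, T (lp.single 2 i 1) = f i

/-- `f` is a `J`-frame: it is a Bessel family (it admits a bounded synthesis operator `T`),
and the ranges of `T₊ = T P₊` and `T₋ = T P₋` (the synthesis operators of the subfamilies of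
`J`-nonnegative and `J`-negative vectors) are maximal uniformly `J`-positive resp. maximal
uniformly `J`-negative subspaces of `H`. -/
def IsJFrame {I : Type*} (J : H →L[ℂ] H) (f : I → H) : Prop :=
  ∃ T Tp Tm : lp (fun _ : I => ℂ) 2 →L[ℂ] H,
    IsSynthesis f T ∧
    IsSynthesis (fun i => if 0 ≤ (⟪J (f i), f i⟫).re then f i else 0) Tp ∧
    IsSynthesis (fun i => if 0 ≤ (⟪J (f i), f i⟫).re then 0 else f i) Tm ∧
    MaxUnifJPos J (LinearMap.range (Tp : lp (fun _ : I => ℂ) 2 →ₗ[ℂ] H)) ∧ MaxUnifJNeg J (LinearMap.range (Tm : lp (fun _ : I => ℂ) 2 →ₗ[ℂ] H))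

/-- `c₀(M, C)`: supremum of `|⟪m,n⟫|` over unit vectors `m ∈ M` and unit `J`-neutral vectors
`n` (the cone `C = {n | [n,n] = 0}`). -/
def c0 (J : H →L[ℂ] H) (M : Submodule ℂ H) : ℝ :=
  sSup {r : ℝ | ∃ m ∈ M, ∃ n : H, ⟪J n, n⟫ = 0 ∧ ‖m‖ = 1 ∧ ‖n‖ = 1 ∧ r = ‖⟪m, n⟫‖}

/-- Cosine of the Friedrichs angle between two subspaces. -/
def friedrichs (S T : Submodule ℂ H) : ℝ :=
  sSup {r : ℝ | ∃ x ∈ S ⊓ (S ⊓ T)ᗮ, ∃ y ∈ T ⊓ (S ⊓ T)ᗮ, ‖x‖ = 1 ∧ ‖y‖ = 1 ∧ r = ‖⟪x, y⟫‖}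

/-- The reduced minimum modulus `γ(A) = inf {‖Ax‖ : x ∈ N(A)^⊥, ‖x‖ = 1}`. -/
def rmm {E F : Type*} [NormedAddCommGroup E] [InnerProductSpace ℂ E]
    [NormedAddCommGroup F] [InnerProductSpace ℂ F] (A : E →L[ℂ] F) : ℝ :=
  sInf {r : ℝ | ∃ x ∈ (LinearMap.ker (A : E →ₗ[ℂ] F))ᗮ, ‖x‖ = 1 ∧ r = ‖A x‖}

/-- The set `Q` of bounded idempotents with uniformly `J`-positive range and uniformly
`J`-negative kernel. -/
def QSet (J : H →L[ℂ] H) : Set (H →L[ℂ] H) :=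
  {Q | Q ∘L Q = Q ∧ UnifJPos J (LinearMap.range (Q : H →ₗ[ℂ] H)) ∧ UnifJNeg J (LinearMap.ker (Q : H →ₗ[ℂ] H))}

/-- `ℓ²(s)` as a subspace of `ℓ²(I)`, for `s : Set I`. -/
def lpSub {I : Type*} (s : Set I) : Submodule ℂ (lp (fun _ : I => ℂ) 2) where
  carrier := {x | ∀ i ∉ s, x i = 0}
  zero_mem' := by intro i _; simp
  add_mem' := by
    intro a b ha hb i hi
    have h : (↑(a + b) : ∀ _ : I, ℂ) i = a i + b i := by rw [lp.coeFn_add]; rfl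
    rw [h, ha i hi, hb i hi, add_zero]
  smul_mem' := by
    intro c x hx i hi
    have h : (↑(c • x) : ∀ _ : I, ℂ) i = c • (x i : ℂ) := by rw [lp.coeFn_smul]; rfl
    rw [h, hx i hi, smul_zero]

/-- `S` is the `J`-frame operator of some `J`-frame: `S = T T^#` where `T` is the synthesis
operator of a `J`-frame and `T^# = J₂ T* J`. -/
def IsJFrameOperator {H : Type u} [NormedAddCommGroup H] [InnerProductSpace ℂ H]
    [CompleteSpace H] (J S : H →L[ℂ] H) : Prop :=
  ∃ (I : Type u) (f : I → H) (T Tp Tm : lp (fun _ : I => ℂ) 2 →L[ℂ] H)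
    (J2 : lp (fun _ : I => ℂ) 2 →L[ℂ] lp (fun _ : I => ℂ) 2),
    IsSynthesis f T ∧
    IsSynthesis (fun i => if 0 ≤ (⟪J (f i), f i⟫).re then f i else 0) Tp ∧
    IsSynthesis (fun i => if 0 ≤ (⟪J (f i), f i⟫).re then 0 else f i) Tm ∧
    MaxUnifJPos J (LinearMap.range (Tp : lp (fun _ : I => ℂ) 2 →ₗ[ℂ] H)) ∧ MaxUnifJNeg J (LinearMap.range (Tm : lp (fun _ : I => ℂ) 2 →ₗ[ℂ] H)) ∧
    (∀ (x : lp (fun _ : I => ℂ) 2) (i : I),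
      J2 x i = if 0 ≤ (⟪J (f i), f i⟫).re then (x i : ℂ) else -(x i : ℂ)) ∧
    S = T ∘L J2 ∘L adjoint T ∘L J

section Aux

open scoped ENNReal NNReal

variable {H' : Type*} [NormedAddCommGroup H'] [InnerProductSpace ℂ H'] [CompleteSpace H']

lemma complex_re_le_norm (z : ℂ) : z.re ≤ ‖z‖ := by
  exact Complex.re_le_norm z

lemma inner_J_comm {J : H' →L[ℂ] H'} (hJsa : IsSelfAdjoint J) (x y : H') :
    ⟪J x, y⟫ = ⟪x, J y⟫ := by
  conv_lhs => rw [← hJsa.adjoint_eq]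
  exact ContinuousLinearMap.adjoint_inner_left J y x

lemma norm_J_apply {J : H' →L[ℂ] H'} (hJsa : IsSelfAdjoint J) (hJsq : J ∘L J = 1) (x : H') :
    ‖J x‖ = ‖x‖ := by
  have h1 : J (J x) = x := by
    have := congrArg (fun T : H' →L[ℂ] H' => T x) hJsq
    simpa using this
  have h2 : ⟪J x, J x⟫ = ⟪x, x⟫ := by rw [inner_J_comm hJsa, h1]
  have h3 : ‖J x‖ ^ 2 = ‖x‖ ^ 2 := by
    have e1 := inner_self_eq_norm_sq (𝕜 := ℂ) (J x)
    have e2 := inner_self_eq_norm_sq (𝕜 := ℂ) x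
    rw [h2] at e1
    rw [e2] at e1
    exact e1.symm
  have := congrArg Real.sqrt h3
  rwa [Real.sqrt_sq (norm_nonneg _), Real.sqrt_sq (norm_nonneg _)] at this

lemma unifJPos_neg_iff (J : H' →L[ℂ] H') (M : Submodule ℂ H') :
    UnifJPos (-J) M ↔ UnifJNeg J M := by
  constructor
  · rintro ⟨α, hα, h⟩
    refine ⟨α, hα, fun x hx => ?_⟩
    have := h x hx
    simp only [ContinuousLinearMap.neg_apply, inner_neg_left, Complex.neg_re] at this
    linarith
  · rintro ⟨α, hα, h⟩
    refine ⟨α, hα, fun x hx => ?_⟩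
    have := h x hx
    simp only [ContinuousLinearMap.neg_apply, inner_neg_left, Complex.neg_re]
    linarith

lemma maxUnifJPos_neg_iff (J : H' →L[ℂ] H') (M : Submodule ℂ H') :
    MaxUnifJPos (-J) M ↔ MaxUnifJNeg J M := by
  unfold MaxUnifJPos MaxUnifJNeg
  simp only [unifJPos_neg_iff]

set_option maxHeartbeats 2000000 in
/-- Key lemma: a frame for a maximal uniformly `J`-positive subspace `M` (with vectors in `M`)
has a bounded synthesis operator whose range is exactly `M`. -/
lemma key {H I : Type*} [NormedAddCommGroup H] [InnerProductSpace ℂ H] [CompleteSpace H]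
    (J : H →L[ℂ] H) (hJsa : IsSelfAdjoint J) (hJsq : J ∘L J = 1)
    (M : Submodule ℂ H) (hM : MaxUnifJPos J M)
    (Ip : Set I) (f : I → H) (hf : ∀ i ∈ Ip, f i ∈ M)
    (A B : ℝ) (hA : 0 < A)
    (hframe : ∀ g ∈ M,
      A * (⟪J g, g⟫).re ≤ ∑' i : Ip, ‖⟪J g, f i⟫‖ ^ 2 ∧
        ∑' i : Ip, ‖⟪J g, f i⟫‖ ^ 2 ≤ B * (⟪J g, g⟫).re) :
    ∃ Tp : lp (fun _ : I => ℂ) 2 →L[ℂ] H,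
      (∀ i : I, Tp (lp.single 2 i 1) = if i ∈ Ip then f i else 0) ∧
      LinearMap.range (Tp : lp (fun _ : I => ℂ) 2 →ₗ[ℂ] H) = M := by
  classical
  obtain ⟨⟨α, hα, hαM⟩, hMmax⟩ := hM
  -- M is closed
  have hMcl : IsClosed (M : Set H) := by
    have hc2 : Continuous fun x : H => (⟪J x, x⟫).re :=
      Complex.continuous_re.comp (J.continuous.inner continuous_id)
    have hcl : IsClosed {x : H | α * ‖x‖ ^ 2 ≤ (⟪J x, x⟫).re} :=
      isClosed_le (by continuity) hc2
    have hsub : (M.topologicalClosure : Set H) ⊆ {x : H | α * ‖x‖ ^ 2 ≤ (⟪J x, x⟫).re} := by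
      rw [Submodule.topologicalClosure_coe]
      exact closure_minimal (fun x hx => hαM x hx) hcl
    have heq := hMmax M.topologicalClosure ⟨α, hα, fun x hx => hsub hx⟩
      M.le_topologicalClosure
    rw [← heq]
    exact M.isClosed_topologicalClosure
  haveI : CompleteSpace M := hMcl.completeSpace_coe
  -- replace B with a positive constant
  set B' : ℝ := max B 1 with hB'def
  have hB' : 0 < B' := lt_of_lt_of_le one_pos (le_max_right _ _)
  have hre_nonneg : ∀ g ∈ M, 0 ≤ (⟪J g, g⟫).re := fun g hg =>
    le_trans (by positivity) (hαM g hg)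
  have hframe' : ∀ g ∈ M,
      A * (⟪J g, g⟫).re ≤ ∑' i : Ip, ‖⟪J g, f i⟫‖ ^ 2 ∧
        ∑' i : Ip, ‖⟪J g, f i⟫‖ ^ 2 ≤ B' * (⟪J g, g⟫).re := by
    intro g hg
    refine ⟨(hframe g hg).1, le_trans (hframe g hg).2 ?_⟩
    exact mul_le_mul_of_nonneg_right (le_max_left _ _) (hre_nonneg g hg)
  -- summability for every g ∈ M
  have hsum : ∀ g ∈ M, Summable fun i : Ip => ‖⟪J g, f i⟫‖ ^ 2 := by
    intro g hg
    by_contra hns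
    have h0 : ∑' i : Ip, ‖⟪J g, (f i : H)⟫‖ ^ 2 = 0 := tsum_eq_zero_of_not_summable hns
    have hlow := (hframe g hg).1
    rw [h0] at hlow
    have hre := hαM g hg
    have hg2 : ‖g‖ ^ 2 = 0 := by
      refine le_antisymm ?_ (sq_nonneg _)
      by_contra hpos
      push_neg at hpos
      have h1 : 0 < (⟪J g, g⟫).re := lt_of_lt_of_le (mul_pos hα hpos) hre
      nlinarith
    have hg0 : g = 0 := norm_eq_zero.mp (pow_eq_zero_iff (two_ne_zero)|>.mp hg2)
    apply hns
    subst hg0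
    simp only [map_zero, inner_zero_left, norm_zero]
    simpa using summable_zero
  set K : ℝ := B' / α with hKdef
  have hKpos : 0 < K := div_pos hB' hα
  -- Bessel bound over finite subsets of the subtype
  have bessel : ∀ (h : H) (t : Finset Ip),
      (∑ j ∈ t, ‖⟪(f j : H), h⟫‖ ^ 2) ≤ K * ‖h‖ ^ 2 := by
    intro h t
    set S : ℝ := ∑ j ∈ t, ‖⟪(f (j : I) : H), h⟫‖ ^ 2 with hSdef
    have hS0 : 0 ≤ S := Finset.sum_nonneg fun _ _ => sq_nonneg _
    set g : H := ∑ j ∈ t, ⟪f (j : I), h⟫ • f (j : I) with hgdef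
    have hgM : g ∈ M := Submodule.sum_mem _ fun j _ => M.smul_mem _ (hf j j.2)
    have h1 : ⟪g, h⟫ = (S : ℂ) := by
      rw [hgdef, sum_inner, hSdef]
      push_cast
      refine Finset.sum_congr rfl fun j _ => ?_
      rw [inner_smul_left, RCLike.conj_mul]
      norm_num
    have h2 : S ≤ ‖g‖ * ‖h‖ := by
      calc S = ‖(S : ℂ)‖ := by
              rw [Complex.norm_real, Real.norm_of_nonneg hS0]
        _ = ‖⟪g, h⟫‖ := by rw [h1]
        _ ≤ ‖g‖ * ‖h‖ := norm_inner_le_norm _ _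
    have hx0 : 0 ≤ (⟪J g, g⟫).re := hre_nonneg g hgM
    have hxα : α * ‖g‖ ^ 2 ≤ (⟪J g, g⟫).re := hαM g hgM
    have hup : ∑ j ∈ t, ‖⟪J g, (f j : H)⟫‖ ^ 2 ≤ B' * (⟪J g, g⟫).re :=
      le_trans (Summable.sum_le_tsum t (fun j _ => sq_nonneg _) (hsum g hgM)) (hframe' g hgM).2
    -- Cauchy-Schwarz step: re⟪Jg,g⟫ ≤ B' * S
    have hinner : ⟪J g, g⟫ = ∑ j ∈ t, ⟪f (j : I), h⟫ * ⟪J g, f (j : I)⟫ := by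
      conv_lhs => rw [hgdef]
      rw [inner_sum]
      exact Finset.sum_congr rfl fun j _ => inner_smul_right _ _ _
    have habs : ‖⟪J g, g⟫‖ ≤ ∑ j ∈ t, ‖⟪f (j : I), h⟫‖ * ‖⟪J g, f (j : I)⟫‖ := by
      rw [hinner]
      refine le_trans (norm_sum_le _ _) (le_of_eq ?_)
      exact Finset.sum_congr rfl fun j _ => norm_mul _ _
    have hCS : (∑ j ∈ t, ‖⟪f (j : I), h⟫‖ * ‖⟪J g, f (j : I)⟫‖) ^ 2 ≤
        S * (∑ j ∈ t, ‖⟪J g, (f j : H)⟫‖ ^ 2) := by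
      simpa [hSdef] using Finset.sum_mul_sq_le_sq_mul_sq t
        (fun j => ‖⟪f (j : I), h⟫‖) (fun j => ‖⟪J g, f (j : I)⟫‖)
    have hre_le : (⟪J g, g⟫).re ≤ ‖⟪J g, g⟫‖ := complex_re_le_norm _
    have hsq : ((⟪J g, g⟫).re) ^ 2 ≤ S * (B' * (⟪J g, g⟫).re) := by
      have h5 : ((⟪J g, g⟫).re) ^ 2 ≤ ‖⟪J g, g⟫‖ ^ 2 := by
        have hn : 0 ≤ ‖⟪J g, g⟫‖ := norm_nonneg _
        nlinarith [hre_le, hx0]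
      have h6 : ‖⟪J g, g⟫‖ ^ 2 ≤ S * (∑ j ∈ t, ‖⟪J g, (f j : H)⟫‖ ^ 2) :=
        le_trans (pow_le_pow_left₀ (norm_nonneg _) habs 2) hCS
      have h7 : S * (∑ j ∈ t, ‖⟪J g, (f j : H)⟫‖ ^ 2) ≤ S * (B' * (⟪J g, g⟫).re) :=
        mul_le_mul_of_nonneg_left hup hS0
      linarith
    have hxB : (⟪J g, g⟫).re ≤ B' * S := by
      rcases eq_or_lt_of_le hx0 with hx | hx
      · rw [← hx]; positivity
      · nlinarith
    -- combine
    have hgnorm : α * ‖g‖ ^ 2 ≤ B' * S := le_trans hxα hxB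
    rcases eq_or_lt_of_le hS0 with hS | hS
    · rw [← hS]; positivity
    · have hS2 : S ^ 2 ≤ ‖g‖ ^ 2 * ‖h‖ ^ 2 := by nlinarith [norm_nonneg g, norm_nonneg h]
      rw [hKdef, div_mul_eq_mul_div, le_div_iff₀ hα]
      nlinarith [norm_nonneg h, sq_nonneg ‖h‖]
  -- Bessel bound over finite subsets of I
  have besselI : ∀ (h : H) (s : Finset I),
      (∑ i ∈ s, ‖(if i ∈ Ip then ⟪f i, h⟫ else 0 : ℂ)‖ ^ 2) ≤ K * ‖h‖ ^ 2 := by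
    intro h s
    have heq : (∑ i ∈ s, ‖(if i ∈ Ip then ⟪f i, h⟫ else 0 : ℂ)‖ ^ 2) =
        ∑ j ∈ s.subtype (· ∈ Ip), ‖⟪(f j : H), h⟫‖ ^ 2 := by
      calc (∑ i ∈ s, ‖(if i ∈ Ip then ⟪f i, h⟫ else 0 : ℂ)‖ ^ 2)
          = ∑ i ∈ s.filter (· ∈ Ip), ‖⟪f i, h⟫‖ ^ 2 := by
            rw [Finset.sum_filter]
            refine Finset.sum_congr rfl fun i _ => ?_
            by_cases hi : i ∈ Ip <;> simp [hi]
        _ = ∑ j ∈ s.subtype (· ∈ Ip), ‖⟪(f j : H), h⟫‖ ^ 2 :=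
            (Finset.sum_subtype_eq_sum_filter (fun i : I => ‖⟪f i, h⟫‖ ^ 2) (s := s)).symm
    rw [heq]
    exact bessel h _
  -- membership in lp
  have hmem : ∀ h : H, Memℓp (fun i => if i ∈ Ip then ⟪f i, h⟫ else 0) 2 := by
    intro h
    refine memℓp_gen' (C := K * ‖h‖ ^ 2) ?_
    intro s
    have := besselI h s
    simpa [ENNReal.toReal_ofNat, Real.rpow_natCast] using this
  -- the analysis-type operator C
  let Cl : H →ₗ[ℂ] lp (fun _ : I => ℂ) 2 :=
    { toFun := fun h => ⟨fun i => if i ∈ Ip then ⟪f i, h⟫ else 0, hmem h⟩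
      map_add' := by
        intro a b
        apply lp.ext
        funext i
        show (if i ∈ Ip then ⟪f i, a + b⟫ else 0) =
          (if i ∈ Ip then ⟪f i, a⟫ else 0) + (if i ∈ Ip then ⟪f i, b⟫ else 0)
        by_cases hi : i ∈ Ip <;>
          simp [hi, inner_add_right]
      map_smul' := by
        intro c a
        apply lp.ext
        funext i
        by_cases hi : i ∈ Ip <;>
          simp [hi, inner_smul_right] }
  have hClapply : ∀ (h : H) (i : I), (Cl h : ∀ _ : I, ℂ) i =
      if i ∈ Ip then ⟪f i, h⟫ else 0 := fun h i => rfl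
  have hClnorm : ∀ h : H, ‖Cl h‖ ≤ Real.sqrt K * ‖h‖ := by
    intro h
    have hp2 : (0:ℝ) < (2 : ℝ≥0∞).toReal := by norm_num
    have hn2 : ‖Cl h‖ ^ (2:ℝ) = ∑' i : I, ‖(Cl h : ∀ _ : I, ℂ) i‖ ^ (2:ℝ) := by
      simpa using lp.norm_rpow_eq_tsum hp2 (Cl h)
    have hsum2 : Summable fun i : I => ‖(Cl h : ∀ _ : I, ℂ) i‖ ^ (2:ℝ) :=
      (memℓp_gen_iff hp2).mp (lp.memℓp (Cl h))
    have hles : ∑' i : I, ‖(Cl h : ∀ _ : I, ℂ) i‖ ^ (2:ℝ) ≤ K * ‖h‖ ^ 2 := by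
      refine Summable.tsum_le_of_sum_le hsum2 fun s => ?_
      have := besselI h s
      simpa [hClapply, Real.rpow_natCast] using this
    have hsq : ‖Cl h‖ ^ 2 ≤ K * ‖h‖ ^ 2 := by
      have : ‖Cl h‖ ^ (2:ℝ) ≤ K * ‖h‖ ^ 2 := le_trans (le_of_eq hn2) hles
      simpa [Real.rpow_natCast] using this
    calc ‖Cl h‖ = Real.sqrt (‖Cl h‖ ^ 2) := (Real.sqrt_sq (norm_nonneg _)).symm
      _ ≤ Real.sqrt (K * ‖h‖ ^ 2) := Real.sqrt_le_sqrt hsq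
      _ = Real.sqrt K * ‖h‖ := by
          rw [Real.sqrt_mul hKpos.le, Real.sqrt_sq (norm_nonneg _)]
  let C : H →L[ℂ] lp (fun _ : I => ℂ) 2 := Cl.mkContinuous (Real.sqrt K) hClnorm
  have hCapply : ∀ (h : H) (i : I), (C h : ∀ _ : I, ℂ) i =
      if i ∈ Ip then ⟪f i, h⟫ else 0 := fun h i => rfl
  -- synthesis property of the adjoint
  have hsyn : ∀ i : I, (ContinuousLinearMap.adjoint C) (lp.single 2 i 1) =
      if i ∈ Ip then f i else 0 := by
    intro i
    refine ext_inner_right ℂ fun h => ?_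
    rw [ContinuousLinearMap.adjoint_inner_left]
    rw [lp.inner_single_left]
    have h1 : ⟪(1:ℂ), (C h : ∀ _ : I, ℂ) i⟫ = (C h : ∀ _ : I, ℂ) i := by
      simp [RCLike.inner_apply]
    rw [h1, hCapply]
    by_cases hi : i ∈ Ip <;> simp [hi]
  -- range ⊆ M
  have hCzero : ∀ u : H, u ∈ Mᗮ → C u = 0 := by
    intro u hu
    apply lp.ext
    funext i
    have : (C u : ∀ _ : I, ℂ) i = if i ∈ Ip then ⟪f i, u⟫ else 0 := hCapply u i
    rw [this]
    by_cases hi : i ∈ Ip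
    · simp only [hi, if_true]
      have := (Submodule.mem_orthogonal M u).mp hu (f i) (hf i hi)
      simpa [lp.coeFn_zero] using this
    · simp [hi, lp.coeFn_zero]
  have hrange_le : LinearMap.range ((ContinuousLinearMap.adjoint C : lp (fun _ : I => ℂ) 2 →L[ℂ] H) : lp (fun _ : I => ℂ) 2 →ₗ[ℂ] H) ≤ M := by
    rintro x ⟨y, rfl⟩
    rw [← Submodule.orthogonal_orthogonal M]
    rw [Submodule.mem_orthogonal]
    intro u hu
    rw [ContinuousLinearMap.coe_coe, ContinuousLinearMap.adjoint_inner_right, hCzero u hu]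
    simp
  -- the operator Aop = P ∘ J on M is surjective
  let P := M.orthogonalProjection
  let Aop : M →L[ℂ] M := P ∘L (J ∘L M.subtypeL)
  have hAinner : ∀ u v : M, ⟪Aop u, v⟫ = ⟪J (u : H), (v : H)⟫ := by
    intro u v
    show ⟪P (J (u : H)), v⟫ = _
    rw [Submodule.inner_orthogonalProjection_eq_of_mem_right]
  have hAcoer : ∀ u : M, α * ‖u‖ ^ 2 ≤ (⟪Aop u, u⟫).re := by
    intro u
    rw [hAinner]
    simpa using hαM (u : H) u.2
  have hAbelow : ∀ u : M, α * ‖u‖ ≤ ‖Aop u‖ := by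
    intro u
    have h1 := hAcoer u
    have h2 : (⟪Aop u, u⟫).re ≤ ‖Aop u‖ * ‖u‖ :=
      le_trans (complex_re_le_norm _) (norm_inner_le_norm _ _)
    rcases eq_or_lt_of_le (norm_nonneg u) with hu | hu
    · rw [← hu]; simp [norm_nonneg]
    · nlinarith
  have hAanti : AntilipschitzWith (⟨α, hα.le⟩ : ℝ≥0)⁻¹ Aop := by
    refine ContinuousLinearMap.antilipschitz_of_bound Aop fun x => ?_
    have := hAbelow x
    show ‖x‖ ≤ α⁻¹ * ‖Aop x‖
    rw [le_inv_mul_iff₀ (by exact_mod_cast hα)]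
    exact_mod_cast (by linarith : (⟨α, hα.le⟩ : ℝ≥0) * ‖x‖ ≤ ‖Aop x‖)
  have hAclosed : IsClosed (Set.range Aop) :=
    hAanti.isClosed_range Aop.uniformContinuous
  have hAsurj : Function.Surjective Aop := by
    have hr : LinearMap.range (Aop : M →ₗ[ℂ] M) = ⊤ := by
      haveI : CompleteSpace (LinearMap.range Aop) := by
        have : IsClosed ((LinearMap.range (Aop : M →ₗ[ℂ] M) : Submodule ℂ M) : Set M) := by
          simpa [LinearMap.coe_range] using hAclosed
        exact this.completeSpace_coe
      rw [← Submodule.orthogonal_eq_bot_iff]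
      rw [Submodule.eq_bot_iff]
      intro w hw
      have h0 := (Submodule.mem_orthogonal _ w).mp hw (Aop w) ⟨w, rfl⟩
      have h1 := hAcoer w
      rw [h0] at h1
      simp only [Complex.zero_re] at h1
      have : ‖w‖ ^ 2 ≤ 0 := by nlinarith
      have : ‖w‖ = 0 := by nlinarith [sq_nonneg ‖w‖, norm_nonneg w]
      exact norm_eq_zero.mp this
    intro v
    have : v ∈ LinearMap.range (Aop : M →ₗ[ℂ] M) := hr ▸ Submodule.mem_top
    exact this
  -- norm of C w in terms of the frame sum
  have hCnorm : ∀ w : H, ‖C w‖ ^ 2 = ∑' i : Ip, ‖⟪(f i : H), w⟫‖ ^ 2 := by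
    intro w
    have hp2 : (0:ℝ) < (2 : ℝ≥0∞).toReal := by norm_num
    have hn2 : ‖C w‖ ^ (2:ℝ) = ∑' i : I, ‖(C w : ∀ _ : I, ℂ) i‖ ^ (2:ℝ) := by
      simpa using lp.norm_rpow_eq_tsum hp2 (C w)
    have h2 : ∀ a : ℝ, a ^ (2:ℝ) = a ^ 2 := fun a => by
      rw [show ((2:ℝ) = ((2:ℕ):ℝ)) by norm_num, Real.rpow_natCast]
    have heq : (fun i : I => ‖(C w : ∀ _ : I, ℂ) i‖ ^ (2:ℝ)) =
        Set.indicator Ip (fun i => ‖⟪f i, w⟫‖ ^ (2:ℝ)) := by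
      funext i
      rw [hCapply, Set.indicator_apply]
      by_cases hi : i ∈ Ip <;> simp [hi]
    calc ‖C w‖ ^ 2 = ‖C w‖ ^ (2:ℝ) := (h2 _).symm
      _ = ∑' i : I, ‖(C w : ∀ _ : I, ℂ) i‖ ^ (2:ℝ) := hn2
      _ = ∑' i : I, Set.indicator Ip (fun i => ‖⟪f i, w⟫‖ ^ (2:ℝ)) i := by rw [heq]
      _ = ∑' i : Ip, ‖⟪(f i : H), w⟫‖ ^ (2:ℝ) :=
          (tsum_subtype Ip (fun i => ‖⟪f i, w⟫‖ ^ (2:ℝ))).symm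
      _ = ∑' i : Ip, ‖⟪(f i : H), w⟫‖ ^ 2 := tsum_congr fun i => h2 _
  -- frame sum identity: for u ∈ M, ∑'_{Ip} ‖⟪J u, f i⟫‖² = ‖C (J u)‖²
  have hCJnorm : ∀ u : H, ‖C (J u)‖ ^ 2 = ∑' i : Ip, ‖⟪J u, (f i : H)⟫‖ ^ 2 := by
    intro u
    rw [hCnorm (J u)]
    exact tsum_congr fun i => by rw [norm_inner_symm]
  -- the operator Sop and its properties
  let Sop : M →L[ℂ] H := (ContinuousLinearMap.adjoint C) ∘L (C ∘L (J ∘L M.subtypeL))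
  have hSapply : ∀ u : M, Sop u = (ContinuousLinearMap.adjoint C) (C (J (u : H))) :=
    fun u => rfl
  have hSbelow : ∀ u : M, (A * α) * ‖u‖ ≤ ‖Sop u‖ := by
    intro u
    have h1 : ⟪Sop u, J (u : H)⟫ = ((‖C (J (u : H))‖ : ℂ)) ^ 2 := by
      rw [hSapply, ContinuousLinearMap.adjoint_inner_left]
      exact inner_self_eq_norm_sq_to_K _
    have h2 : ‖C (J (u : H))‖ ^ 2 ≥ A * (⟪J (u : H), (u : H)⟫).re := by
      rw [hCJnorm]
      exact (hframe (u : H) u.2).1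
    have h3 : A * (⟪J (u : H), (u : H)⟫).re ≥ A * (α * ‖(u : H)‖ ^ 2) :=
      mul_le_mul_of_nonneg_left (hαM _ u.2) hA.le
    have h4 : (⟪Sop u, J (u : H)⟫).re ≤ ‖Sop u‖ * ‖J (u : H)‖ :=
      le_trans (complex_re_le_norm _) (norm_inner_le_norm _ _)
    rw [h1] at h4
    have h5 : ((((‖C (J (u : H))‖ : ℂ)) ^ 2).re) = ‖C (J (u : H))‖ ^ 2 := by
      norm_cast
    rw [h5] at h4
    rw [norm_J_apply hJsa hJsq] at h4
    have h6 : A * (α * ‖(u : H)‖ ^ 2) ≤ ‖Sop u‖ * ‖(u : H)‖ := by linarith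
    have hnu : ‖u‖ = ‖(u : H)‖ := rfl
    rcases eq_or_lt_of_le (norm_nonneg (u : H)) with hu | hu
    · rw [hnu, ← hu]; simp [norm_nonneg]
    · rw [hnu]; nlinarith
  have hSanti : AntilipschitzWith (⟨A * α, by positivity⟩ : ℝ≥0)⁻¹ Sop := by
    refine ContinuousLinearMap.antilipschitz_of_bound Sop fun x => ?_
    have h := hSbelow x
    show ‖x‖ ≤ (A * α)⁻¹ * ‖Sop x‖
    rw [le_inv_mul_iff₀ (by positivity : (0:ℝ) < A * α)]
    exact h
  have hSclosed : IsClosed (Set.range Sop) :=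
    hSanti.isClosed_range Sop.uniformContinuous
  set N : Submodule ℂ H := LinearMap.range (Sop : M →ₗ[ℂ] H) with hNdef
  haveI : CompleteSpace N := by
    have : IsClosed ((N : Submodule ℂ H) : Set H) := by
      simpa [hNdef, LinearMap.coe_range] using hSclosed
    exact this.completeSpace_coe
  have hNM : N ≤ M := by
    rintro x ⟨u, rfl⟩
    exact hrange_le ⟨_, rfl⟩
  -- C (J u) = C (Aop u) for u ∈ M
  have hCP : ∀ w : H, C w = C ((P w : H)) := by
    intro w
    apply lp.ext
    funext i
    rw [hCapply, hCapply]
    by_cases hi : i ∈ Ip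
    · simp only [hi, if_true]
      have hm : w - (P w : H) ∈ Mᗮ := Submodule.sub_starProjection_mem_orthogonal (K := M) w
      have h0 : ⟪f i, w - (P w : H)⟫ = 0 :=
        (Submodule.mem_orthogonal M _).mp hm (f i) (hf i hi)
      rw [inner_sub_right] at h0
      exact sub_eq_zero.mp h0
    · simp [hi]
  have hCJA : ∀ u : M, C (J (u : H)) = C ((Aop u : H)) := by
    intro u
    exact hCP (J (u : H))
  have hMN : M ≤ N := by
    intro w hw
    have hwd : w - ((N.orthogonalProjection w : N) : H) ∈ Nᗮ :=
      Submodule.sub_starProjection_mem_orthogonal (K := N) w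
    set d : H := w - ((N.orthogonalProjection w : N) : H) with hddef
    have hdM : d ∈ M := M.sub_mem hw (hNM (N.orthogonalProjection w).2)
    have hCd : ∀ u : M, ⟪C (J (u : H)), C d⟫ = 0 := by
      intro u
      have h0 : ⟪Sop u, d⟫ = 0 :=
        (Submodule.mem_orthogonal N d).mp hwd (Sop u) ⟨u, rfl⟩
      rw [hSapply, ContinuousLinearMap.adjoint_inner_left] at h0
      exact h0
    obtain ⟨u, hu⟩ := hAsurj ⟨d, hdM⟩
    have hCd0 : C d = 0 := by
      have h0 := hCd u
      rw [hCJA u, hu] at h0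
      exact inner_self_eq_zero.mp h0
    have hCJu0 : C (J (u : H)) = 0 := by
      rw [hCJA u, hu]
      exact hCd0
    have hsum0 : ∑' i : Ip, ‖⟪J (u : H), (f i : H)⟫‖ ^ 2 = 0 := by
      rw [← hCJnorm, hCJu0]
      simp
    have hlow := (hframe (u : H) u.2).1
    rw [hsum0] at hlow
    have hre := hαM (u : H) u.2
    have hu0 : (u : H) = 0 := by
      have h2 : ‖(u : H)‖ ^ 2 = 0 := by
        refine le_antisymm ?_ (sq_nonneg _)
        by_contra hpos
        push_neg at hpos
        have h1 : 0 < (⟪J (u : H), (u : H)⟫).re := lt_of_lt_of_le (mul_pos hα hpos) hre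
        nlinarith
      exact norm_eq_zero.mp (pow_eq_zero_iff two_ne_zero |>.mp h2)
    have hd0 : d = 0 := by
      have : ((Aop u : M) : H) = d := by rw [hu]
      rw [← this]
      show ((P (J (u : H)) : M) : H) = 0
      rw [hu0]
      simp
    have : w = ((N.orthogonalProjection w : N) : H) := by
      rw [← sub_eq_zero]
      exact hd0
    rw [this]
    exact (N.orthogonalProjection w).2
  have hNrange : N ≤ LinearMap.range ((ContinuousLinearMap.adjoint C : lp (fun _ : I => ℂ) 2 →L[ℂ] H) : lp (fun _ : I => ℂ) 2 →ₗ[ℂ] H) := by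
    rintro x ⟨u, rfl⟩
    exact ⟨_, (hSapply u).symm⟩
  exact ⟨ContinuousLinearMap.adjoint C, hsyn,
    le_antisymm hrange_le (le_trans hMN hNrange)⟩

end Aux

set_option maxHeartbeats 1000000 in
/-- glueing frames of a maximal dual pair of uniformly definite subspaces
gives a `J`-frame. -/
theorem statement0 {H I : Type*} [NormedAddCommGroup H] [InnerProductSpace ℂ H] [CompleteSpace H]
    (J : H →L[ℂ] H) (hJsa : IsSelfAdjoint J) (hJsq : J ∘L J = 1)
    (Mp Mm : Submodule ℂ H) (hMp : MaxUnifJPos J Mp) (hMm : MaxUnifJNeg J Mm)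
    (Ip Im : Set I) (hdisj : Disjoint Ip Im) (hcover : Ip ∪ Im = Set.univ)
    (f : I → H) (hfp : ∀ i ∈ Ip, f i ∈ Mp) (hfm : ∀ i ∈ Im, f i ∈ Mm)
    (Ap Bp : ℝ) (hAp : 0 < Ap) (hApBp : Ap ≤ Bp)
    (hframeP : ∀ g ∈ Mp,
      Ap * (⟪J g, g⟫).re ≤ ∑' i : Ip, ‖⟪J g, f i⟫‖ ^ 2 ∧
        ∑' i : Ip, ‖⟪J g, f i⟫‖ ^ 2 ≤ Bp * (⟪J g, g⟫).re)
    (Am Bm : ℝ) (hAm : 0 < Am) (hAmBm : Am ≤ Bm)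
    (hframeM : ∀ g ∈ Mm,
      Am * (-(⟪J g, g⟫).re) ≤ ∑' i : Im, ‖⟪J g, f i⟫‖ ^ 2 ∧
        ∑' i : Im, ‖⟪J g, f i⟫‖ ^ 2 ≤ Bm * (-(⟪J g, g⟫).re)) :
    IsJFrame J f := by
  classical
  -- facts about signs
  obtain ⟨αp, hαp, hαpM⟩ := hMp.1
  obtain ⟨αm, hαm, hαmM⟩ := hMm.1
  have hsignP : ∀ i ∈ Ip, 0 ≤ (⟪J (f i), f i⟫).re := fun i hi =>
    le_trans (by positivity) (hαpM (f i) (hfp i hi))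
  have hsignM : ∀ i ∈ Im, 0 ≤ (⟪J (f i), f i⟫).re → f i = 0 := by
    intro i hi hpos
    have h1 := hαmM (f i) (hfm i hi)
    have h2 : ‖f i‖ ^ 2 = 0 := le_antisymm (by nlinarith) (sq_nonneg _)
    exact norm_eq_zero.mp (pow_eq_zero_iff two_ne_zero |>.mp h2)
  have hmem : ∀ i, i ∉ Ip → i ∈ Im := by
    intro i hi
    have : i ∈ Ip ∪ Im := hcover ▸ Set.mem_univ i
    rcases this with h | h
    · exact absurd h hi
    · exact h
  have hnotm : ∀ i, i ∈ Ip → i ∉ Im := fun i hi => Set.disjoint_left.mp hdisj hi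
  -- positive part
  obtain ⟨Tp, hTpsyn, hTprange⟩ := key J hJsa hJsq Mp hMp Ip f hfp Ap Bp hAp hframeP
  -- negative part, via -J
  have hJ'sa : IsSelfAdjoint (-J) := hJsa.neg
  have hJ'sq : (-J) ∘L (-J) = 1 := by
    rw [ContinuousLinearMap.neg_comp, ContinuousLinearMap.comp_neg, neg_neg, hJsq]
  have hMm' : MaxUnifJPos (-J) Mm := (maxUnifJPos_neg_iff J Mm).mpr hMm
  have hframeM' : ∀ g ∈ Mm,
      Am * (⟪(-J) g, g⟫).re ≤ ∑' i : Im, ‖⟪(-J) g, f i⟫‖ ^ 2 ∧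
        ∑' i : Im, ‖⟪(-J) g, f i⟫‖ ^ 2 ≤ Bm * (⟪(-J) g, g⟫).re := by
    intro g hg
    have := hframeM g hg
    simpa only [ContinuousLinearMap.neg_apply, inner_neg_left, Complex.neg_re, norm_neg]
      using this
  obtain ⟨Tm, hTmsyn, hTmrange⟩ := key (-J) hJ'sa hJ'sq Mm hMm' Im f hfm Am Bm hAm hframeM'
  refine ⟨Tp + Tm, Tp, Tm, ?_, ?_, ?_, ?_, ?_⟩
  · -- synthesis of f
    intro i
    rw [ContinuousLinearMap.add_apply, hTpsyn i, hTmsyn i]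
    by_cases hi : i ∈ Ip
    · simp [hi, hnotm i hi]
    · simp [hi, hmem i hi]
  · -- synthesis of positive part
    intro i
    rw [hTpsyn i]
    by_cases hi : i ∈ Ip
    · simp [hi, hsignP i hi]
    · have him : i ∈ Im := hmem i hi
      by_cases hs : 0 ≤ (⟪J (f i), f i⟫).re
      · simp [hi, hs, hsignM i him hs]
      · simp [hi, hs]
  · -- synthesis of negative part
    intro i
    rw [hTmsyn i]
    by_cases hi : i ∈ Ip
    · simp [hnotm i hi, hsignP i hi]
    · have him : i ∈ Im := hmem i hi
      by_cases hs : 0 ≤ (⟪J (f i), f i⟫).re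
      · simp [him, hs, hsignM i him hs]
      · simp [him, hs]
  · rw [hTprange]; exact hMp
  · rw [hTmrange]; exact (maxUnifJPos_neg_iff J _).mp (hTmrange ▸ hMm')

end KreinFrames
end
end

section
/- Let F = (f_i)_{i∈I} be a J-frame for a Krein space H, with M₊ = R(T₊) and M₋ = R(T₋). Then there exist constants B₋ ≤ A₋ < 0 < A₊ ≤ B₊ such that A₊[f,f] ≤ Σ_{i∈I₊} |[f, f_i]|² ≤ B₊[f,f] for every f ∈ M₊, and A₋[f,f] ≤ Σ_{i∈I₋} |[f, f_i]|² ≤ B₋[f,f] for every f ∈ M₋. In particular, (f_i)_{i∈I₊} is a frame for the Hilbert space (M₊, [·,·]) and (f_i)_{i∈I₋} is a frame for the Hilbert space (M₋, −[·,·]). -/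
/- Frames for Krein spaces ("J-frames"), following Giribet–Maestripieri–Martínez Pería–Massey.

A Krein space is modelled as a complex Hilbert space `H` together with a fundamental symmetry
`J : H →L[ℂ] H` (selfadjoint, `J ∘L J = 1`); the indefinite inner product is `[x,y] = ⟪J x, y⟫`. -/

noncomputable section

open scoped ComplexInnerProductSpace ComplexOrder
open ContinuousLinearMap

attribute [local instance] Classical.propDecidable

namespace KreinFrames

universe u

variable {H : Type*} [NormedAddCommGroup H] [InnerProductSpace ℂ H]

section Aux

variable {H : Type*} [NormedAddCommGroup H] [InnerProductSpace ℂ H]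

lemma unifJNeg_iff_neg (J : H →L[ℂ] H) (M : Submodule ℂ H) :
    UnifJNeg J M ↔ UnifJPos (-J) M := by
  unfold UnifJNeg UnifJPos
  constructor <;> rintro ⟨α, hα, h⟩ <;> refine ⟨α, hα, fun x hx => ?_⟩
  · have := h x hx
    simp only [ContinuousLinearMap.neg_apply, inner_neg_left, Complex.neg_re]
    linarith
  · have := h x hx
    simp only [ContinuousLinearMap.neg_apply, inner_neg_left, Complex.neg_re] at this
    linarith

lemma maxUnifJNeg_iff_neg (J : H →L[ℂ] H) (M : Submodule ℂ H) :
    MaxUnifJNeg J M ↔ MaxUnifJPos (-J) M := by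
  unfold MaxUnifJNeg MaxUnifJPos
  simp only [unifJNeg_iff_neg]

lemma re_inner_le_norm_mul (x y : H) : (⟪x, y⟫).re ≤ ‖x‖ * ‖y‖ :=
  le_trans (Complex.re_le_norm _) (by
    exact norm_inner_le_norm x y)

lemma real_lower (α C nJ r s n : ℝ) (hα : 0 < α) (hC : 0 < C) (hs0 : 0 ≤ s)
    (hnJ : 0 ≤ nJ) (hαr : α * n ^ 2 ≤ r) (hrle : r ≤ nJ * n ^ 2)
    (hlow : r ≤ s * (C * n)) (hnpos : 0 < n) :
    α ^ 2 / (C ^ 2 * (nJ + 1)) * r ≤ s ^ 2 := by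
  have h1 : α * n ≤ s * C := by
    have h2 : α * n * n ≤ s * C * n := by nlinarith
    exact le_of_mul_le_mul_right h2 hnpos
  have h2 : α ^ 2 * n ^ 2 ≤ s ^ 2 * C ^ 2 := by nlinarith
  rw [div_mul_eq_mul_div, div_le_iff₀ (by positivity)]
  nlinarith [sq_nonneg α, sq_nonneg n]

lemma real_upper (α K r s n : ℝ) (hα : 0 < α) (hK : 0 ≤ K) (hs0 : 0 ≤ s)
    (hn0 : 0 ≤ n) (hαr : α * n ^ 2 ≤ r) (hsK : s ≤ K * n) :
    s ^ 2 ≤ K ^ 2 / α * r := by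
  rw [div_mul_eq_mul_div, le_div_iff₀ hα]
  nlinarith [mul_le_mul hsK hsK hs0 (mul_nonneg hK hn0),
    mul_le_mul_of_nonneg_left hαr (sq_nonneg K), sq_nonneg K]

lemma maxUnifJPos_isClosed (J : H →L[ℂ] H) (M : Submodule ℂ H) (h : MaxUnifJPos J M) :
    IsClosed (M : Set H) := by
  obtain ⟨⟨α, hα, hpos⟩, hmax⟩ := h
  have hS : IsClosed {x : H | α * ‖x‖ ^ 2 ≤ (⟪J x, x⟫).re} := by
    apply isClosed_le
    · exact continuous_const.mul (continuous_norm.pow 2)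
    · exact Complex.continuous_re.comp (Continuous.inner J.continuous continuous_id)
  have hN : UnifJPos J M.topologicalClosure := by
    refine ⟨α, hα, fun x hx => ?_⟩
    have hx' : x ∈ closure (M : Set H) := by
      rwa [← Submodule.topologicalClosure_coe]
    exact closure_minimal (fun y hy => hpos y hy) hS hx'
  have heq := hmax _ hN M.le_topologicalClosure
  rw [← heq]
  exact Submodule.isClosed_topologicalClosure M

lemma tsum_norm_inner_sq {I : Type*} [CompleteSpace H]
    (A : lp (fun _ : I => ℂ) 2 →L[ℂ] H)
    (fp : I → H) (hA : IsSynthesis fp A) (P : I → Prop) (h0 : ∀ i, ¬ P i → fp i = 0)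
    (h : H) :
    ∑' i : {j : I // P j}, ‖⟪h, fp i⟫‖ ^ 2 = ‖adjoint A h‖ ^ 2 := by
  classical
  set y := adjoint A h with hy
  have hcoord : ∀ i : I, ‖⟪h, fp i⟫‖ = ‖(y : ∀ _ : I, ℂ) i‖ := by
    intro i
    have h1 : (y : ∀ _ : I, ℂ) i = ⟪fp i, h⟫ := by
      have h2 : ⟪lp.single 2 i (1 : ℂ), y⟫ = ⟪(1 : ℂ), (y : ∀ _ : I, ℂ) i⟫ :=
        lp.inner_single_left i (1 : ℂ) y
      have h3 : ⟪lp.single 2 i (1 : ℂ), y⟫ = ⟪A (lp.single 2 i (1 : ℂ)), h⟫ := by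
        rw [hy, ContinuousLinearMap.adjoint_inner_right]
      rw [hA i] at h3
      have h4 : ⟪(1 : ℂ), (y : ∀ _ : I, ℂ) i⟫ = (y : ∀ _ : I, ℂ) i := by
        simp [RCLike.inner_apply]
      rw [← h4, ← h2, h3]
    rw [h1, norm_inner_symm]
  have hnorm : ‖y‖ ^ 2 = ∑' i, ‖(y : ∀ _ : I, ℂ) i‖ ^ 2 := by
    have h2 : (0 : ℝ) < (2 : ENNReal).toReal := by norm_num
    have := lp.norm_rpow_eq_tsum h2 y
    have ht : (2 : ENNReal).toReal = ((2 : ℕ) : ℝ) := by norm_num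
    rw [ht] at this
    simpa [Real.rpow_natCast] using this
  have hsub : ∑' i : {j : I // P j}, ‖⟪h, fp i⟫‖ ^ 2
      = ∑' i : I, ‖⟪h, fp i⟫‖ ^ 2 := by
    have h5 := tsum_subtype {j : I | P j} (fun i => ‖⟪h, fp i⟫‖ ^ 2)
    have h6 : ∀ i : I, Set.indicator {j : I | P j} (fun i => ‖⟪h, fp i⟫‖ ^ 2) i
        = ‖⟪h, fp i⟫‖ ^ 2 := by
      intro i
      by_cases hi : P i
      · exact Set.indicator_of_mem hi _
      · have hi' : i ∉ {j : I | P j} := hi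
        rw [Set.indicator_of_notMem hi', h0 i hi]
        simp
    exact h5.trans (tsum_congr h6)
  rw [hsub, hnorm]
  exact tsum_congr fun i => by rw [hcoord i]

lemma key_s1 {I : Type*} [CompleteSpace H] (J : H →L[ℂ] H)
    (A : lp (fun _ : I => ℂ) 2 →L[ℂ] H)
    (α : ℝ) (hα : 0 < α)
    (hpos : ∀ x ∈ LinearMap.range (A : lp (fun _ : I => ℂ) 2 →ₗ[ℂ] H), α * ‖x‖ ^ 2 ≤ (⟪J x, x⟫).re)
    (hclosed : IsClosed ((LinearMap.range (A : lp (fun _ : I => ℂ) 2 →ₗ[ℂ] H) : Submodule ℂ H) : Set H)) :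
    ∃ Ap Bp : ℝ, 0 < Ap ∧ Ap ≤ Bp ∧ ∀ g ∈ LinearMap.range (A : lp (fun _ : I => ℂ) 2 →ₗ[ℂ] H),
      Ap * (⟪J g, g⟫).re ≤ ‖adjoint A (J g)‖ ^ 2 ∧
        ‖adjoint A (J g)‖ ^ 2 ≤ Bp * (⟪J g, g⟫).re := by
  set M : Submodule ℂ H := LinearMap.range (A : lp (fun _ : I => ℂ) 2 →ₗ[ℂ] H) with hM
  haveI : CompleteSpace M := hclosed.completeSpace_coe
  set A' : lp (fun _ : I => ℂ) 2 →L[ℂ] M :=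
    A.codRestrict M (fun x => LinearMap.mem_range_self _ x) with hA'
  have hsurj : Function.Surjective A' := by
    rintro ⟨g, x, hx⟩
    exact ⟨x, Subtype.ext hx⟩
  obtain ⟨C, hC, hCx⟩ := ContinuousLinearMap.exists_preimage_norm_le A' hsurj
  have hK0 : 0 ≤ ‖adjoint A‖ * ‖J‖ := mul_nonneg (norm_nonneg _) (norm_nonneg _)
  refine ⟨α ^ 2 / (C ^ 2 * (‖J‖ + 1)),
    max (α ^ 2 / (C ^ 2 * (‖J‖ + 1))) ((‖adjoint A‖ * ‖J‖) ^ 2 / α),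
    ?_, le_max_left _ _, ?_⟩
  · have h1 : (0 : ℝ) < ‖J‖ + 1 := by positivity
    positivity
  intro g hg
  have hs0 : (0 : ℝ) ≤ ‖adjoint A (J g)‖ := norm_nonneg _
  have hn0 : (0 : ℝ) ≤ ‖g‖ := norm_nonneg _
  have hαr : α * ‖g‖ ^ 2 ≤ (⟪J g, g⟫).re := hpos g hg
  have hr0 : 0 ≤ (⟪J g, g⟫).re := le_trans (by positivity) hαr
  have hrle : (⟪J g, g⟫).re ≤ ‖J‖ * ‖g‖ ^ 2 := by
    calc (⟪J g, g⟫).re ≤ ‖J g‖ * ‖g‖ := re_inner_le_norm_mul (J g) g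
    _ ≤ ‖J‖ * ‖g‖ * ‖g‖ :=
        mul_le_mul_of_nonneg_right (J.le_opNorm g) (norm_nonneg g)
    _ = ‖J‖ * ‖g‖ ^ 2 := by ring
  have hsK : ‖adjoint A (J g)‖ ≤ ‖adjoint A‖ * ‖J‖ * ‖g‖ := by
    calc ‖adjoint A (J g)‖ ≤ ‖adjoint A‖ * ‖J g‖ := (adjoint A).le_opNorm (J g)
    _ ≤ ‖adjoint A‖ * (‖J‖ * ‖g‖) :=
        mul_le_mul_of_nonneg_left (J.le_opNorm g) (norm_nonneg _)
    _ = ‖adjoint A‖ * ‖J‖ * ‖g‖ := by ring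
  constructor
  · -- lower bound
    rcases eq_or_lt_of_le hn0 with hn0' | hnpos
    · -- g = 0
      have hg0 : g = 0 := by
        rw [← norm_eq_zero]; exact hn0'.symm
      subst hg0
      simp
    · obtain ⟨x, hx1, hx2⟩ := hCx ⟨g, hg⟩
      have hx1' : A x = g := congrArg Subtype.val hx1
      have hx2' : ‖x‖ ≤ C * ‖g‖ := hx2
      have hlow : (⟪J g, g⟫).re ≤ ‖adjoint A (J g)‖ * (C * ‖g‖) := by
        have e1 : (⟪J g, g⟫).re = (⟪adjoint A (J g), x⟫).re := by
          rw [ContinuousLinearMap.adjoint_inner_left, hx1']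
        calc (⟪J g, g⟫).re = (⟪adjoint A (J g), x⟫).re := e1
        _ ≤ ‖adjoint A (J g)‖ * ‖x‖ := re_inner_le_norm_mul _ _
        _ ≤ ‖adjoint A (J g)‖ * (C * ‖g‖) := mul_le_mul_of_nonneg_left hx2' hs0
      exact real_lower α C ‖J‖ _ _ _ hα hC hs0 (norm_nonneg J) hαr hrle hlow hnpos
  · -- upper bound
    have := real_upper α (‖adjoint A‖ * ‖J‖) _ _ _ hα hK0 hs0 hn0 hαr hsK
    exact le_trans this (mul_le_mul_of_nonneg_right (le_max_right _ _) hr0)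

end Aux

/-- the positive/negative subfamilies of a `J`-frame are frames for the Hilbert
spaces `(M₊, [·,·])` and `(M₋, -[·,·])`. -/
theorem statement1 {H I : Type*} [NormedAddCommGroup H] [InnerProductSpace ℂ H] [CompleteSpace H]
    (J : H →L[ℂ] H) (hJsa : IsSelfAdjoint J) (hJsq : J ∘L J = 1)
    (f : I → H) (T Tp Tm : lp (fun _ : I => ℂ) 2 →L[ℂ] H)
    (hT : IsSynthesis f T)
    (hTp : IsSynthesis (fun i => if 0 ≤ (⟪J (f i), f i⟫).re then f i else 0) Tp)
    (hTm : IsSynthesis (fun i => if 0 ≤ (⟪J (f i), f i⟫).re then 0 else f i) Tm)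
    (hmaxp : MaxUnifJPos J (LinearMap.range (Tp : lp (fun _ : I => ℂ) 2 →ₗ[ℂ] H)))
    (hmaxm : MaxUnifJNeg J (LinearMap.range (Tm : lp (fun _ : I => ℂ) 2 →ₗ[ℂ] H))) :
    ∃ Bm Am Ap Bp : ℝ, Bm ≤ Am ∧ Am < 0 ∧ 0 < Ap ∧ Ap ≤ Bp ∧
      (∀ g ∈ LinearMap.range (Tp : lp (fun _ : I => ℂ) 2 →ₗ[ℂ] H),
        Ap * (⟪J g, g⟫).re ≤ ∑' i : {j : I // 0 ≤ (⟪J (f j), f j⟫).re}, ‖⟪J g, f i⟫‖ ^ 2 ∧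
          ∑' i : {j : I // 0 ≤ (⟪J (f j), f j⟫).re}, ‖⟪J g, f i⟫‖ ^ 2 ≤ Bp * (⟪J g, g⟫).re) ∧
      (∀ g ∈ LinearMap.range (Tm : lp (fun _ : I => ℂ) 2 →ₗ[ℂ] H),
        Am * (⟪J g, g⟫).re ≤ ∑' i : {j : I // ¬ 0 ≤ (⟪J (f j), f j⟫).re}, ‖⟪J g, f i⟫‖ ^ 2 ∧
          ∑' i : {j : I // ¬ 0 ≤ (⟪J (f j), f j⟫).re}, ‖⟪J g, f i⟫‖ ^ 2 ≤ Bm * (⟪J g, g⟫).re) := by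
  classical
  -- positive part
  obtain ⟨αp, hαp, hposp⟩ := hmaxp.1
  have hclp := maxUnifJPos_isClosed J _ hmaxp
  obtain ⟨Ap, Bp, hAp, hApBp, hkeyp⟩ := key_s1 J Tp αp hαp hposp hclp
  -- negative part, via -J
  have hmaxm' : MaxUnifJPos (-J) (LinearMap.range (Tm : lp (fun _ : I => ℂ) 2 →ₗ[ℂ] H)) := (maxUnifJNeg_iff_neg J _).mp hmaxm
  obtain ⟨αm, hαm, hposm⟩ := hmaxm'.1
  have hclm := maxUnifJPos_isClosed (-J) _ hmaxm'
  obtain ⟨Ap', Bp', hAp', hApBp', hkeym⟩ := key_s1 (-J) Tm αm hαm hposm hclm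
  refine ⟨-Bp', -Ap', Ap, Bp, by linarith, by linarith, hAp, hApBp, ?_, ?_⟩
  · -- positive family
    intro g hg
    have hbridge : ∑' i : {j : I // 0 ≤ (⟪J (f j), f j⟫).re}, ‖⟪J g, f i⟫‖ ^ 2
        = ‖adjoint Tp (J g)‖ ^ 2 := by
      rw [← tsum_norm_inner_sq Tp (fun i => if 0 ≤ (⟪J (f i), f i⟫).re then f i else 0) hTp
        (fun j => 0 ≤ (⟪J (f j), f j⟫).re) (fun i hi => if_neg hi) (J g)]
      exact tsum_congr fun i => by rw [if_pos i.2]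
    rw [hbridge]
    exact hkeyp g hg
  · -- negative family
    intro g hg
    have hbridge : ∑' i : {j : I // ¬ 0 ≤ (⟪J (f j), f j⟫).re}, ‖⟪J g, f i⟫‖ ^ 2
        = ‖adjoint Tm (J g)‖ ^ 2 := by
      rw [← tsum_norm_inner_sq Tm (fun i => if 0 ≤ (⟪J (f i), f i⟫).re then 0 else f i) hTm
        (fun j => ¬ 0 ≤ (⟪J (f j), f j⟫).re) (fun i hi => by
          simp only [not_not] at hi; exact if_pos hi) (J g)]
      exact tsum_congr fun i => by rw [if_neg i.2]
    rw [hbridge]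
    obtain ⟨h1, h2⟩ := hkeym g hg
    have he : ‖adjoint Tm ((-J) g)‖ = ‖adjoint Tm (J g)‖ := by
      rw [ContinuousLinearMap.neg_apply, map_neg, norm_neg]
    have hre : (⟪(-J) g, g⟫).re = -(⟪J g, g⟫).re := by
      rw [ContinuousLinearMap.neg_apply, inner_neg_left, Complex.neg_re]
    rw [he, hre] at h1 h2
    have e1 : -Bp' * (⟪J g, g⟫).re = Bp' * (-(⟪J g, g⟫).re) := by ring
    have e2 : -Ap' * (⟪J g, g⟫).re = Ap' * (-(⟪J g, g⟫).re) := by ring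
    constructor
    · rw [e2]; linarith
    · rw [e1]; linarith

end KreinFrames
end
end

section
/- Let F = (f_i)_{i∈I} be a Bessel family in a Krein space H, let M be the closed linear span of {f_i : i ∈ I} and N = M ∩ M^{[⊥]}. If there exist constants 0 < A ≤ B such that A[f,f] ≤ Σ_{i∈I} |[f, f_i]|² ≤ B[f,f] for every f ∈ M, then M ⊖ N := M ∩ N^⊥ is a closed uniformly J-positive subspace of H. -/
/- Frames for Krein spaces ("J-frames"), following Giribet–Maestripieri–Martínez Pería–Massey.

A Krein space is modelled as a complex Hilbert space `H` together with a fundamental symmetry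
`J : H →L[ℂ] H` (selfadjoint, `J ∘L J = 1`); the indefinite inner product is `[x,y] = ⟪J x, y⟫`. -/

noncomputable section

open scoped ComplexInnerProductSpace ComplexOrder
open ContinuousLinearMap

attribute [local instance] Classical.propDecidable

namespace KreinFrames

universe u

variable {H : Type*} [NormedAddCommGroup H] [InnerProductSpace ℂ H]

/-- Cauchy–Schwarz for the (possibly degenerate) positive sesquilinear form `(x,y) ↦ ⟪T x, y⟫`
of a symmetric operator `T` which is positive on a submodule `W`. -/
private lemma cs_aux {H : Type*} [NormedAddCommGroup H] [InnerProductSpace ℂ H]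
    (T : H →L[ℂ] H) (hT : ∀ x y : H, ⟪T x, y⟫ = ⟪x, T y⟫)
    (W : Submodule ℂ H) (hpos : ∀ x ∈ W, 0 ≤ (⟪T x, x⟫).re)
    {x y : H} (hx : x ∈ W) (hy : y ∈ W) :
    ‖⟪T x, y⟫‖ ^ 2 ≤ (⟪T x, x⟫).re * (⟪T y, y⟫).re := by
  set b : ℂ := ⟪T x, y⟫ with hb
  by_cases hb0 : b = 0
  · rw [hb0]
    simpa using mul_nonneg (hpos x hx) (hpos y hy)
  · have hbn : (0:ℝ) < ‖b‖ := norm_pos_iff.mpr hb0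
    have hyx : ⟪T y, x⟫ = starRingEnd ℂ b := by
      rw [hT y x, ← inner_conj_symm]
    have hquad : ∀ t : ℝ, 0 ≤ ((⟪T y, y⟫).re * ‖b‖ ^ 2) * (t * t)
        + (2 * ‖b‖ ^ 2) * t + (⟪T x, x⟫).re := by
      intro t
      set c : ℂ := (t : ℂ) * starRingEnd ℂ b with hc
      have hz : x + c • y ∈ W := W.add_mem hx (W.smul_mem c hy)
      have h1 : b * starRingEnd ℂ b = ((‖b‖ : ℂ)) ^ 2 := RCLike.mul_conj b
      have hexp : ⟪T (x + c • y), x + c • y⟫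
          = ⟪T x, x⟫ + ((2 * t * ‖b‖ ^ 2 : ℝ) : ℂ)
            + ((t * t * ‖b‖ ^ 2 : ℝ) : ℂ) * ⟪T y, y⟫ := by
      -- expand and use `h1`
        simp only [map_add, map_smul, inner_add_left, inner_add_right, inner_smul_left,
          inner_smul_right, hyx, hc, map_mul, Complex.conj_conj, Complex.conj_ofReal]
        rw [← hb]
        push_cast
        linear_combination (2 * (t:ℂ) + (t:ℂ) * (t:ℂ) * ⟪T y, y⟫) * h1
      have h0 := hpos _ hz
      rw [hexp] at h0
      simp only [Complex.add_re, Complex.ofReal_re, Complex.re_ofReal_mul] at h0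
      nlinarith [h0]
    have hd := discrim_le_zero hquad
    rw [discrim] at hd
    have hb2 : (0:ℝ) < ‖b‖ ^ 2 := by positivity
    nlinarith [hd, hb2]

/-- if a Bessel family satisfies the indefinite frame inequalities on
`M = span {f_i}`, then `M ⊖ N` (with `N = M ∩ M^{[⊥]}`) is closed and uniformly `J`-positive. -/
theorem statement3 {H I : Type*} [NormedAddCommGroup H] [InnerProductSpace ℂ H] [CompleteSpace H]
    (J : H →L[ℂ] H) (hJsa : IsSelfAdjoint J) (hJsq : J ∘L J = 1)
    (f : I → H) (B0 : ℝ) (hB0 : 0 < B0)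
    (hBessel : ∀ g : H, ∑' i, ‖⟪g, f i⟫‖ ^ 2 ≤ B0 * ‖g‖ ^ 2)
    (M N : Submodule ℂ H)
    (hM : M = (Submodule.span ℂ (Set.range f)).topologicalClosure)
    (hN : N = M ⊓ Jorth J M)
    (A B : ℝ) (hA : 0 < A) (hAB : A ≤ B)
    (hineq : ∀ g ∈ M, A * (⟪J g, g⟫).re ≤ ∑' i, ‖⟪J g, f i⟫‖ ^ 2 ∧
      ∑' i, ‖⟪J g, f i⟫‖ ^ 2 ≤ B * (⟪J g, g⟫).re) :
    IsClosed ((M ⊓ Nᗮ : Submodule ℂ H) : Set H) ∧ UnifJPos J (M ⊓ Nᗮ) := by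
  classical
  -- basic symmetry facts
  have hJsym : ∀ x y : H, ⟪J x, y⟫ = ⟪x, J y⟫ := hJsa.isSymmetric
  -- closedness facts
  have hMc : IsClosed (M : Set H) := by
    rw [hM]; exact Submodule.isClosed_topologicalClosure _
  have hNc : IsClosed (N : Set H) := by
    have hJOc : IsClosed ((Jorth J M : Submodule ℂ H) : Set H) := by
      have heq : ((Jorth J M : Submodule ℂ H) : Set H)
          = ⋂ m ∈ (M : Set H), {x : H | ⟪J x, m⟫ = 0} := by
        ext x
        simp only [Set.mem_iInter, Set.mem_setOf_eq, SetLike.mem_coe]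
        exact Iff.rfl
      rw [heq]
      exact isClosed_biInter fun m _ =>
        isClosed_eq ((J.continuous.inner continuous_const)) continuous_const
    rw [hN, Submodule.coe_inf]
    exact hMc.inter hJOc
  have hM'c : IsClosed ((M ⊓ Nᗮ : Submodule ℂ H) : Set H) := by
    rw [Submodule.coe_inf]
    exact hMc.inter N.isClosed_orthogonal
  haveI : CompleteSpace (M ⊓ Nᗮ : Submodule ℂ H) := hM'c.completeSpace_coe
  haveI : CompleteSpace N := hNc.completeSpace_coe
  -- the orthogonal projection onto M' = M ⊓ Nᗮ
  set P : H →L[ℂ] H := (M ⊓ Nᗮ).subtypeL ∘L (M ⊓ Nᗮ).orthogonalProjectionOnto with hP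
  have hPsym : ∀ x y : H, ⟪P x, y⟫ = ⟪x, P y⟫ := (isSelfAdjoint_starProjection (M ⊓ Nᗮ)).isSymmetric
  have hPmem : ∀ x : H, P x ∈ M ⊓ Nᗮ := fun x => ((M ⊓ Nᗮ).orthogonalProjectionOnto x).2
  have hPeq : ∀ h ∈ M ⊓ Nᗮ, P h = h := by
    intro h hh
    exact Submodule.starProjection_eq_self_iff.mpr hh
  have hPzero : ∀ x ∈ (M ⊓ Nᗮ)ᗮ, P x = 0 := by
    intro x hx
    have := Submodule.orthogonalProjectionOnto_apply_of_mem_orthogonal hx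
    simp only [hP, ContinuousLinearMap.comp_apply, this, Submodule.subtypeL_apply,
      ZeroMemClass.coe_zero]
  -- the operator Γ = P J P
  set G : H →L[ℂ] H := P ∘L J ∘L P with hG
  have hGapp : ∀ x : H, G x = P (J (P x)) := fun x => rfl
  have hGsym : ∀ x y : H, ⟪G x, y⟫ = ⟪x, G y⟫ := by
    intro x y
    rw [hGapp, hGapp, hPsym, hJsym, hPsym]
  have hq : ∀ x : H, ⟪G x, x⟫ = ⟪J (P x), P x⟫ := fun x => hPsym (J (P x)) x
  -- positivity of [·,·] on M
  have hposM : ∀ m ∈ M, 0 ≤ (⟪J m, m⟫).re := by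
    intro m hm
    have h2 := (hineq m hm).2
    have h0 : 0 ≤ ∑' i, ‖⟪J m, f i⟫‖ ^ 2 := tsum_nonneg fun i => by positivity
    nlinarith [hA.trans_le hAB]
  have hN_le_M : N ≤ M := by rw [hN]; exact inf_le_left
  have hfM : ∀ i, f i ∈ M := by
    intro i
    rw [hM]
    exact Submodule.le_topologicalClosure _ (Submodule.subset_span (Set.mem_range_self i))
  have hinnerN : ∀ m ∈ M, ∀ n ∈ N, ⟪J m, n⟫ = 0 := by
    intro m hm n hn
    have hnJO : n ∈ Jorth J M := by rw [hN] at hn; exact hn.2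
    have h1 : ⟪J n, m⟫ = 0 := hnJO m hm
    rw [hJsym, ← inner_conj_symm, h1, map_zero]
  -- decomposition: m - P m ∈ N for m ∈ M
  have hdecomp : ∀ m ∈ M, m - P m ∈ N := by
    intro m hm
    set n : H := (N.orthogonalProjectionOnto m : H) with hn
    have hnN : n ∈ N := (N.orthogonalProjectionOnto m).2
    have hr : m - n ∈ Nᗮ := Submodule.sub_starProjection_mem_orthogonal (K := N) m
    have hrM' : m - n ∈ M ⊓ Nᗮ := ⟨M.sub_mem hm (hN_le_M hnN), hr⟩
    have hnperp : n ∈ (M ⊓ Nᗮ)ᗮ := by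
      intro u hu
      exact inner_eq_zero_symm.mp ((Submodule.mem_orthogonal N u).mp hu.2 n hnN)
    have hPm : P m = m - n := by
      have h1 : P (m - n) = m - n := hPeq _ hrM'
      have h2 : P n = 0 := hPzero n hnperp
      have h3 : m = (m - n) + n := by abel
      calc P m = P ((m - n) + n) := by rw [← h3]
        _ = P (m - n) + P n := map_add P _ _
        _ = m - n := by rw [h1, h2, add_zero]
    rw [hPm]
    simpa using hnN
  -- key identity: ⟪J (P x), f i⟫ = ⟪G x, f i⟫
  have hterm : ∀ (x : H) (i : I), ⟪J (P x), f i⟫ = ⟪G x, f i⟫ := by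
    intro x i
    have h1 : f i - P (f i) ∈ N := hdecomp _ (hfM i)
    have h2 : ⟪J (P x), f i - P (f i)⟫ = 0 := hinnerN _ (hPmem x).1 _ h1
    have h3 : ⟪J (P x), f i⟫ = ⟪J (P x), P (f i)⟫ := by
      have := inner_sub_right (𝕜 := ℂ) (J (P x)) (f i) (P (f i))
      rw [h2] at this
      linear_combination -this
    rw [h3, hGapp, ← hPsym]
  -- key inequality 1: A * re⟪G x, x⟫ ≤ B0 * ‖G x‖²
  have hkey1 : ∀ x : H, A * (⟪G x, x⟫).re ≤ B0 * ‖G x‖ ^ 2 := by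
    intro x
    have h1 := (hineq (P x) (hPmem x).1).1
    have h2 : ∑' i, ‖⟪J (P x), f i⟫‖ ^ 2 = ∑' i, ‖⟪G x, f i⟫‖ ^ 2 :=
      tsum_congr fun i => by rw [hterm]
    have h3 := hBessel (G x)
    rw [hq]
    calc A * (⟪J (P x), P x⟫).re ≤ ∑' i, ‖⟪J (P x), f i⟫‖ ^ 2 := h1
      _ = ∑' i, ‖⟪G x, f i⟫‖ ^ 2 := h2
      _ ≤ B0 * ‖G x‖ ^ 2 := h3
  -- vanishing of the form on M' forces 0
  have hzero : ∀ g, g ∈ M ⊓ Nᗮ → (⟪J g, g⟫).re = 0 → g = 0 := by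
    intro g hg h0
    have hfi : ∀ i, ⟪J g, f i⟫ = 0 := by
      intro i
      have hcs := cs_aux J hJsym M hposM hg.1 (hfM i)
      rw [h0, zero_mul] at hcs
      have : ‖⟪J g, f i⟫‖ = 0 := by nlinarith [norm_nonneg (⟪J g, f i⟫ : ℂ)]
      exact norm_eq_zero.mp this
    have hJg : g ∈ Jorth J M := by
      have hsub : M ≤ LinearMap.ker (innerSL ℂ (J g) : H →ₗ[ℂ] ℂ) := by
        rw [hM]
        refine Submodule.topologicalClosure_minimal _ ?_ (ContinuousLinearMap.isClosed_ker _)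
        rw [Submodule.span_le]
        rintro _ ⟨i, rfl⟩
        exact hfi i
      intro m hm
      exact hsub hm
    have hgN : g ∈ N := by rw [hN]; exact ⟨hg.1, hJg⟩
    have hgg : ⟪g, g⟫ = (0 : ℂ) := (Submodule.mem_orthogonal N g).mp hg.2 g hgN
    exact inner_self_eq_zero.mp hgg
  -- V := closure of range G is all of M'
  set V : Submodule ℂ H := (LinearMap.range (G : H →ₗ[ℂ] H)).topologicalClosure with hV
  have hVc : IsClosed (V : Set H) := Submodule.isClosed_topologicalClosure _
  haveI : CompleteSpace V := hVc.completeSpace_coe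
  have hranM' : LinearMap.range (G : H →ₗ[ℂ] H) ≤ M ⊓ Nᗮ := by
    rintro _ ⟨x, rfl⟩
    exact hPmem (J (P x))
  have hVM' : V ≤ M ⊓ Nᗮ := Submodule.topologicalClosure_minimal _ hranM' hM'c
  have hM'V : ∀ h ∈ M ⊓ Nᗮ, h ∈ V := by
    intro h hh
    set w : H := h - (V.orthogonalProjectionOnto h : H) with hw
    have hwV : w ∈ Vᗮ := Submodule.sub_starProjection_mem_orthogonal (K := V) h
    have hwM' : w ∈ M ⊓ Nᗮ := Submodule.sub_mem _ hh (hVM' (V.orthogonalProjectionOnto h).2)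
    have hGw : ⟪G w, w⟫ = 0 := by
      have hmem : G w ∈ V := (LinearMap.range (G : H →ₗ[ℂ] H)).le_topologicalClosure ⟨w, rfl⟩
      exact (Submodule.mem_orthogonal V w).mp hwV (G w) hmem
    have h0 : (⟪J w, w⟫).re = 0 := by
      have heq := hq w
      rw [hPeq w hwM'] at heq
      rw [← heq, hGw, Complex.zero_re]
    have hw0 : w = 0 := hzero w hwM' h0
    have : h = (V.orthogonalProjectionOnto h : H) := by
      have := sub_eq_zero.mp (hw ▸ hw0)
      exact this
    rw [this]
    exact (V.orthogonalProjectionOnto h).2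
  -- key inequality 2 on range G : A ‖G x‖² ≤ B0 * re⟪J (G x), G x⟫
  have hkey2 : ∀ x : H, A * ‖G x‖ ^ 2 ≤ B0 * (⟪J (G x), G x⟫).re := by
    intro x
    by_cases hG0 : G x = 0
    · simp [hG0]
    · have hPG : P (G x) = G x := hPeq _ (hPmem (J (P x)))
      have ha3eq : ⟪G (G x), G x⟫ = ⟪J (G x), G x⟫ := by
        rw [hq (G x), hPG]
      have ha1 : 0 ≤ (⟪G x, x⟫).re := by rw [hq]; exact hposM _ (hPmem x).1
      have ha3pos : 0 ≤ (⟪J (G x), G x⟫).re := hposM _ (hPmem (J (P x))).1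
      have hcs := cs_aux G hGsym ⊤ (fun z _ => by rw [hq]; exact hposM _ (hPmem z).1)
        (Submodule.mem_top (x := G x)) (Submodule.mem_top (x := x))
      rw [ha3eq] at hcs
      have hmid : ⟪G (G x), x⟫ = ((‖G x‖ : ℂ)) ^ 2 := by
        rw [hGsym (G x) x, inner_self_eq_norm_sq_to_K]
        rfl
      rw [hmid] at hcs
      have hmid2 : ‖((‖G x‖ : ℂ)) ^ 2‖ ^ 2 = (‖G x‖ ^ 2) * (‖G x‖ ^ 2) := by
        rw [norm_pow, Complex.norm_real, norm_norm]
        ring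
      rw [hmid2] at hcs
      have hk1 := hkey1 x
      have hs : 0 < ‖G x‖ ^ 2 := pow_pos (norm_pos_iff.mpr hG0) 2
      nlinarith [hcs, hk1, hs, ha3pos, ha1, hA, hB0]
  -- conclude
  refine ⟨hM'c, A / B0, div_pos hA hB0, ?_⟩
  intro h hh
  have hhV : h ∈ V := hM'V h hh
  have hhcl : h ∈ closure ((LinearMap.range (G : H →ₗ[ℂ] H) : Submodule ℂ H) : Set H) := by
    rw [← Submodule.topologicalClosure_coe]
    exact hhV
  have hSclosed : IsClosed {y : H | A * ‖y‖ ^ 2 ≤ B0 * (⟪J y, y⟫).re} := by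
    apply isClosed_le
    · exact (continuous_const.mul ((continuous_norm).pow 2))
    · exact continuous_const.mul (Complex.continuous_re.comp
        ((J.continuous.inner continuous_id)))
  have hSsub : ((LinearMap.range (G : H →ₗ[ℂ] H) : Submodule ℂ H) : Set H)
      ⊆ {y : H | A * ‖y‖ ^ 2 ≤ B0 * (⟪J y, y⟫).re} := by
    rintro _ ⟨x, rfl⟩
    exact hkey2 x
  have hfin : A * ‖h‖ ^ 2 ≤ B0 * (⟪J h, h⟫).re :=
    hSclosed.closure_subset ((closure_mono hSsub).trans (by rw [hSclosed.closure_eq]) hhcl)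
  rw [div_mul_eq_mul_div, div_le_iff₀ hB0]
  linarith [hfin]


end KreinFrames
end
end

section
/- Let F = (f_i)_{i∈I} be a Bessel family in a Krein space H, let M be the closed linear span of {f_i : i ∈ I} and N = M ∩ M^{[⊥]}. Assume that F is a frame for the Hilbert space (M, ⟨·,·⟩) and that M ⊖ N := M ∩ N^⊥ is a uniformly J-positive subspace of H. Then there exist constants 0 < A ≤ B such that A[f,f] ≤ Σ_{i∈I} |[f, f_i]|² ≤ B[f,f] for every f ∈ M. -/
/- Frames for Krein spaces ("J-frames"), following Giribet–Maestripieri–Martínez Pería–Massey.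

A Krein space is modelled as a complex Hilbert space `H` together with a fundamental symmetry
`J : H →L[ℂ] H` (selfadjoint, `J ∘L J = 1`); the indefinite inner product is `[x,y] = ⟪J x, y⟫`. -/

noncomputable section

open scoped ComplexInnerProductSpace ComplexOrder
open ContinuousLinearMap

attribute [local instance] Classical.propDecidable

namespace KreinFrames

universe u

variable {H : Type*} [NormedAddCommGroup H] [InnerProductSpace ℂ H]

/-- conversely, if a Bessel family is a frame for the Hilbert space `(M, ⟨·,·⟩)`
and `M ⊖ N` is uniformly `J`-positive, then the indefinite frame inequalities hold on `M`. -/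
theorem statement4 {H I : Type*} [NormedAddCommGroup H] [InnerProductSpace ℂ H] [CompleteSpace H]
    (J : H →L[ℂ] H) (hJsa : IsSelfAdjoint J) (hJsq : J ∘L J = 1)
    (f : I → H) (B0 : ℝ) (hB0 : 0 < B0)
    (hBessel : ∀ g : H, ∑' i, ‖⟪g, f i⟫‖ ^ 2 ≤ B0 * ‖g‖ ^ 2)
    (M N : Submodule ℂ H)
    (hM : M = (Submodule.span ℂ (Set.range f)).topologicalClosure)
    (hN : N = M ⊓ Jorth J M)
    (A' B' : ℝ) (hA' : 0 < A') (hA'B' : A' ≤ B')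
    (hframe : ∀ g ∈ M, A' * ‖g‖ ^ 2 ≤ ∑' i, ‖⟪g, f i⟫‖ ^ 2 ∧
      ∑' i, ‖⟪g, f i⟫‖ ^ 2 ≤ B' * ‖g‖ ^ 2)
    (hMN : UnifJPos J (M ⊓ Nᗮ)) :
    ∃ A B : ℝ, 0 < A ∧ A ≤ B ∧ ∀ g ∈ M,
      A * (⟪J g, g⟫).re ≤ ∑' i, ‖⟪J g, f i⟫‖ ^ 2 ∧
        ∑' i, ‖⟪J g, f i⟫‖ ^ 2 ≤ B * (⟪J g, g⟫).re := by
  obtain ⟨α, hαpos, hα⟩ := hMN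
  -- basic facts about J
  have hJapp : ∀ x y : H, (⟪J x, y⟫ : ℂ) = ⟪x, J y⟫ := by
    intro x y
    conv_lhs => rw [← hJsa.adjoint_eq]
    exact ContinuousLinearMap.adjoint_inner_left J y x
  have hJJ : ∀ x : H, J (J x) = x := by
    intro x
    have h := congrArg (fun T : H →L[ℂ] H => T x) hJsq
    simpa using h
  have hJnorm : ∀ x : H, ‖J x‖ = ‖x‖ := by
    intro x
    have h : (⟪J x, J x⟫ : ℂ) = ⟪x, x⟫ := by rw [hJapp, hJJ]
    rw [norm_eq_sqrt_re_inner (𝕜 := ℂ) (J x), norm_eq_sqrt_re_inner (𝕜 := ℂ) x, h]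
  -- membership and closedness
  have hfM : ∀ i, f i ∈ M := by
    intro i
    rw [hM]
    exact Submodule.le_topologicalClosure _ (Submodule.subset_span ⟨i, rfl⟩)
  have hMclosed : IsClosed (M : Set H) := by
    rw [hM]; exact Submodule.isClosed_topologicalClosure _
  have hNclosed : IsClosed (N : Set H) := by
    have hJo : IsClosed ((Jorth J M : Submodule ℂ H) : Set H) := by
      have he : ((Jorth J M : Submodule ℂ H) : Set H) =
          ⋂ y ∈ (M : Set H), {x : H | (⟪J x, y⟫ : ℂ) = 0} := by
        ext x
        simp only [Set.mem_iInter, Set.mem_setOf_eq, SetLike.mem_coe]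
        rfl
      rw [he]
      exact isClosed_biInter fun y _ =>
        isClosed_eq ((J.continuous).inner continuous_const) continuous_const
    rw [hN, Submodule.coe_inf]
    exact hMclosed.inter hJo
  haveI : CompleteSpace M := hMclosed.completeSpace_coe
  haveI : CompleteSpace N := hNclosed.completeSpace_coe
  refine ⟨min (A' * α ^ 2) (B0 / α), B0 / α, lt_min (by positivity) (by positivity),
    min_le_right _ _, ?_⟩
  intro g hg
  set n : H := (Submodule.orthogonalProjection N g : H) with hn
  set m : H := g - n with hm
  have hnN : n ∈ N := (Submodule.orthogonalProjection N g).2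
  have hmNp : m ∈ Nᗮ := Submodule.sub_starProjection_mem_orthogonal (K := N) g
  have hnM : n ∈ M := by rw [hN] at hnN; exact hnN.1
  have hnJo : ∀ y ∈ M, (⟪J n, y⟫ : ℂ) = 0 := by
    rw [hN] at hnN; exact hnN.2
  have hmM : m ∈ M := Submodule.sub_mem M hg hnM
  have hg_eq : g = m + n := by simp [hm]
  -- [g,g] = [m,m]
  have hJmn : (⟪J m, n⟫ : ℂ) = 0 := by
    rw [hJapp, ← inner_conj_symm, hnJo m hmM, map_zero]
  have hgg : (⟪J g, g⟫ : ℂ) = ⟪J m, m⟫ := by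
    rw [hg_eq, map_add, inner_add_left, inner_add_right, inner_add_right,
      hJmn, hnJo m hmM, hnJo n hnM, add_zero, add_zero, add_zero]
  -- summand equality
  have hsum_eq : ∀ i, (⟪J g, f i⟫ : ℂ) = ⟪J m, f i⟫ := by
    intro i
    rw [hg_eq, map_add, inner_add_left, hnJo (f i) (hfM i), add_zero]
  have htsum_eq : ∑' i, ‖(⟪J g, f i⟫ : ℂ)‖ ^ 2 = ∑' i, ‖(⟪J m, f i⟫ : ℂ)‖ ^ 2 :=
    tsum_congr fun i => by rw [hsum_eq i]
  -- inequalities for m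
  have hαm : α * ‖m‖ ^ 2 ≤ (⟪J m, m⟫ : ℂ).re := hα m ⟨hmM, hmNp⟩
  have hre_nonneg : 0 ≤ (⟪J m, m⟫ : ℂ).re := le_trans (by positivity) hαm
  have hCS : (⟪J m, m⟫ : ℂ).re ≤ ‖m‖ ^ 2 := by
    calc (⟪J m, m⟫ : ℂ).re ≤ ‖(⟪J m, m⟫ : ℂ)‖ := Complex.re_le_norm _
      _ ≤ ‖J m‖ * ‖m‖ := norm_inner_le_norm _ _
      _ = ‖m‖ ^ 2 := by rw [hJnorm]; ring
  constructor
  · -- lower indefinite frame bound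
    set p : H := (Submodule.orthogonalProjection M (J m) : H) with hp
    have hpM : p ∈ M := (Submodule.orthogonalProjection M (J m)).2
    have hperp : J m - p ∈ Mᗮ := Submodule.sub_starProjection_mem_orthogonal (K := M) (J m)
    have hinner_p : ∀ y ∈ M, (⟪J m, y⟫ : ℂ) = ⟪p, y⟫ := by
      intro y hy
      have h0 : (⟪J m - p, y⟫ : ℂ) = 0 := (Submodule.mem_orthogonal' M _).mp hperp y hy
      rw [inner_sub_left] at h0
      exact sub_eq_zero.mp h0
    have hαp : α * ‖m‖ ^ 2 ≤ ‖p‖ * ‖m‖ := by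
      calc α * ‖m‖ ^ 2 ≤ (⟪J m, m⟫ : ℂ).re := hαm
        _ = (⟪p, m⟫ : ℂ).re := by rw [hinner_p m hmM]
        _ ≤ ‖(⟪p, m⟫ : ℂ)‖ := Complex.re_le_norm _
        _ ≤ ‖p‖ * ‖m‖ := norm_inner_le_norm _ _
    have hpsq : α ^ 2 * ‖m‖ ^ 2 ≤ ‖p‖ ^ 2 := by
      rcases eq_or_lt_of_le (norm_nonneg m) with hm0 | hm0
      · rw [← hm0]; nlinarith [sq_nonneg ‖p‖]
      · have h1 : α * ‖m‖ ≤ ‖p‖ := by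
          have := (mul_le_mul_iff_of_pos_right hm0).mp (by nlinarith : (α * ‖m‖) * ‖m‖ ≤ ‖p‖ * ‖m‖)
          exact this
        nlinarith [norm_nonneg p, norm_nonneg m, hαpos.le]
    have hlow : A' * ‖p‖ ^ 2 ≤ ∑' i, ‖(⟪p, f i⟫ : ℂ)‖ ^ 2 := (hframe p hpM).1
    have htsum_p : ∑' i, ‖(⟪p, f i⟫ : ℂ)‖ ^ 2 = ∑' i, ‖(⟪J m, f i⟫ : ℂ)‖ ^ 2 :=
      tsum_congr fun i => by rw [hinner_p (f i) (hfM i)]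
    have hfinal : min (A' * α ^ 2) (B0 / α) * (⟪J g, g⟫ : ℂ).re ≤
        ∑' i, ‖(⟪J m, f i⟫ : ℂ)‖ ^ 2 := by
      rw [hgg]
      have hAle : min (A' * α ^ 2) (B0 / α) ≤ A' * α ^ 2 := min_le_left _ _
      have hAnn : (0 : ℝ) ≤ min (A' * α ^ 2) (B0 / α) := le_min (by positivity) (by positivity)
      calc min (A' * α ^ 2) (B0 / α) * (⟪J m, m⟫ : ℂ).re
          ≤ (A' * α ^ 2) * ‖m‖ ^ 2 := by nlinarith
        _ = A' * (α ^ 2 * ‖m‖ ^ 2) := by ring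
        _ ≤ A' * ‖p‖ ^ 2 := by nlinarith
        _ ≤ ∑' i, ‖(⟪p, f i⟫ : ℂ)‖ ^ 2 := hlow
        _ = ∑' i, ‖(⟪J m, f i⟫ : ℂ)‖ ^ 2 := htsum_p
    rw [htsum_eq]
    exact hfinal
  · -- upper indefinite frame bound
    rw [htsum_eq, hgg]
    calc ∑' i, ‖(⟪J m, f i⟫ : ℂ)‖ ^ 2 ≤ B0 * ‖J m‖ ^ 2 := hBessel (J m)
      _ = B0 * ‖m‖ ^ 2 := by rw [hJnorm]
      _ ≤ (B0 / α) * (⟪J m, m⟫ : ℂ).re := by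
          have h := mul_le_mul_of_nonneg_left hαm (le_of_lt (div_pos hB0 hαpos))
          calc B0 * ‖m‖ ^ 2 = (B0 / α) * (α * ‖m‖ ^ 2) := by field_simp
            _ ≤ (B0 / α) * (⟪J m, m⟫ : ℂ).re := h

end KreinFrames
end
end

section
/- Let H be a Krein space with fundamental symmetry J and fundamental decomposition H = H₊ ⊕ H₋, where H± = ker(J ∓ I); assume H₊ ≠ {0} and H₋ ≠ {0}. Let m ∈ H with ‖m‖ = 1 and write m = m⁺ + m⁻ with m± ∈ H±. Then sup{|⟨m, n⟩| : n ∈ C, ‖n‖ = 1} = (1/√2)(‖m⁺‖ + ‖m⁻‖), where C = {n ∈ H : [n,n] = 0} is the cone of neutral vectors. -/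
/- Frames for Krein spaces ("J-frames"), following Giribet–Maestripieri–Martínez Pería–Massey.

A Krein space is modelled as a complex Hilbert space `H` together with a fundamental symmetry
`J : H →L[ℂ] H` (selfadjoint, `J ∘L J = 1`); the indefinite inner product is `[x,y] = ⟪J x, y⟫`. -/

noncomputable section

open scoped ComplexInnerProductSpace ComplexOrder
open ContinuousLinearMap

attribute [local instance] Classical.propDecidable

namespace KreinFrames

universe u

variable {H : Type*} [NormedAddCommGroup H] [InnerProductSpace ℂ H]

lemma exists_unit_inner {H : Type*} [NormedAddCommGroup H] [InnerProductSpace ℂ H]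
    (P : Submodule ℂ H) (hP : P ≠ ⊥) (w : H) (hw : w ∈ P) :
    ∃ u ∈ P, ‖u‖ = 1 ∧ ⟪w, u⟫ = (‖w‖ : ℂ) := by
  by_cases h : w = 0
  · obtain ⟨u0, hu0P, hu0⟩ := (Submodule.ne_bot_iff P).mp hP
    refine ⟨((‖u0‖⁻¹ : ℝ) : ℂ) • u0, P.smul_mem _ hu0P, ?_, ?_⟩
    · rw [norm_smul]
      simp [norm_inv, inv_mul_cancel₀ (norm_ne_zero_iff.mpr hu0)]
    · simp [h]
  · refine ⟨((‖w‖⁻¹ : ℝ) : ℂ) • w, P.smul_mem _ hw, ?_, ?_⟩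
    · rw [norm_smul]
      simp [norm_inv, inv_mul_cancel₀ (norm_ne_zero_iff.mpr h)]
    · rw [inner_smul_right, inner_self_eq_norm_sq_to_K]
      have hw0 : (‖w‖ : ℂ) ≠ 0 := by exact_mod_cast norm_ne_zero_iff.mpr h
      push_cast
      rw [pow_two, ← mul_assoc]
      simp [h]

/-- for a unit vector `m = m⁺ + m⁻`, the supremum of `|⟪m,n⟫|` over unit neutral
vectors `n` equals `(‖m⁺‖ + ‖m⁻‖)/√2`. -/
theorem statement6 {H : Type*} [NormedAddCommGroup H] [InnerProductSpace ℂ H] [CompleteSpace H]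
    (J : H →L[ℂ] H) (hJsa : IsSelfAdjoint J) (hJsq : J ∘L J = 1)
    (hp : LinearMap.ker ((J - 1 : H →L[ℂ] H) : H →ₗ[ℂ] H) ≠ ⊥) (hm : LinearMap.ker ((J + 1 : H →L[ℂ] H) : H →ₗ[ℂ] H) ≠ ⊥)
    (m mp mm : H) (hmp : mp ∈ LinearMap.ker ((J - 1 : H →L[ℂ] H) : H →ₗ[ℂ] H)) (hmm : mm ∈ LinearMap.ker ((J + 1 : H →L[ℂ] H) : H →ₗ[ℂ] H))
    (hsum : m = mp + mm) (hnorm : ‖m‖ = 1) :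
    sSup {r : ℝ | ∃ n : H, ⟪J n, n⟫ = 0 ∧ ‖n‖ = 1 ∧ r = ‖⟪m, n⟫‖} =
      1 / Real.sqrt 2 * (‖mp‖ + ‖mm‖) := by
  have hsymm : ∀ x y : H, ⟪J x, y⟫ = ⟪x, J y⟫ := fun x y => hJsa.isSymmetric x y
  have hJJ : ∀ x : H, J (J x) = x := by
    intro x
    have := DFunLike.congr_fun hJsq x
    simpa [comp_apply, one_apply] using this
  have hJp : ∀ x ∈ LinearMap.ker ((J - 1 : H →L[ℂ] H) : H →ₗ[ℂ] H), J x = x := by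
    intro x hx
    have h := LinearMap.mem_ker.mp hx
    have h2 : J x - x = 0 := by simpa [sub_apply, one_apply] using h
    exact sub_eq_zero.mp h2
  have hJm : ∀ x ∈ LinearMap.ker ((J + 1 : H →L[ℂ] H) : H →ₗ[ℂ] H), J x = -x := by
    intro x hx
    have h := LinearMap.mem_ker.mp hx
    have h2 : J x + x = 0 := by simpa [add_apply, one_apply] using h
    exact eq_neg_of_add_eq_zero_left h2
  have horth : ∀ x ∈ LinearMap.ker ((J - 1 : H →L[ℂ] H) : H →ₗ[ℂ] H), ∀ y ∈ LinearMap.ker ((J + 1 : H →L[ℂ] H) : H →ₗ[ℂ] H), ⟪x, y⟫ = 0 := by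
    intro x hx y hy
    have h1 := hsymm x y
    rw [hJp x hx, hJm y hy, inner_neg_right] at h1
    have h2 : ⟪x, y⟫ + ⟪x, y⟫ = 0 := by linear_combination h1
    exact add_self_eq_zero.mp h2
  have hs2 : (0:ℝ) < Real.sqrt 2 := Real.sqrt_pos.mpr (by norm_num)
  set S : Set ℝ := {r : ℝ | ∃ n : H, ⟪J n, n⟫ = 0 ∧ ‖n‖ = 1 ∧ r = ‖⟪m, n⟫‖} with hS
  -- attainment
  obtain ⟨u, huP, hu1, hupin⟩ := exists_unit_inner _ hp mp hmp
  obtain ⟨v, hvN, hv1, hvmin⟩ := exists_unit_inner _ hm mm hmm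
  have huv : ⟪u, v⟫ = 0 := horth u huP v hvN
  have hvu : ⟪v, u⟫ = 0 := by rw [← inner_conj_symm, huv]; simp
  have hmmu : ⟪mm, u⟫ = 0 := by rw [← inner_conj_symm, horth u huP mm hmm]; simp
  have hcmem : (1 / Real.sqrt 2 * (‖mp‖ + ‖mm‖)) ∈ S := by
    refine ⟨(((Real.sqrt 2)⁻¹ : ℝ) : ℂ) • (u + v), ?_, ?_, ?_⟩
    · rw [map_smul, inner_smul_left, inner_smul_right, map_add, hJp u huP, hJm v hvN]
      rw [inner_add_left, inner_add_right, inner_add_right, inner_neg_left, inner_neg_left]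
      rw [inner_self_eq_norm_sq_to_K, inner_self_eq_norm_sq_to_K, hu1, hv1, huv, hvu]
      simp
    · rw [norm_smul]
      have : ‖u + v‖ = Real.sqrt 2 := by
        have h := norm_add_sq (𝕜 := ℂ) u v
        rw [hu1, hv1, huv] at h
        simp at h
        rw [show ‖u + v‖ = Real.sqrt (‖u + v‖ ^ 2) from (Real.sqrt_sq (norm_nonneg _)).symm, h]
        norm_num
      rw [this]
      rw [Complex.norm_real, Real.norm_of_nonneg (by positivity)]
      exact inv_mul_cancel₀ (ne_of_gt hs2)
    · rw [inner_smul_right, hsum, inner_add_left, inner_add_right, inner_add_right,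
        hupin, hvmin, horth mp hmp v hvN, hmmu]
      rw [norm_mul]
      push_cast
      simp only [map_zero, add_zero, zero_add]
      rw [show ((‖mp‖ : ℂ) + (‖mm‖ : ℂ)) = ((‖mp‖ + ‖mm‖ : ℝ) : ℂ) by push_cast; ring]
      rw [norm_inv, Complex.norm_real, Complex.norm_real]
      rw [Real.norm_of_nonneg hs2.le, Real.norm_of_nonneg (by positivity), one_div]
  -- upper bound
  have hub : ∀ r ∈ S, r ≤ 1 / Real.sqrt 2 * (‖mp‖ + ‖mm‖) := by
    rintro r ⟨n, hn0, hn1, rfl⟩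
    set np := ((2:ℝ)⁻¹ : ℂ) • (n + J n) with hnp_def
    set nm := ((2:ℝ)⁻¹ : ℂ) • (n - J n) with hnm_def
    have hnpP : np ∈ LinearMap.ker ((J - 1 : H →L[ℂ] H) : H →ₗ[ℂ] H) := by
      rw [LinearMap.mem_ker]
      have : J np = np := by
        rw [hnp_def, map_smul, map_add, hJJ]
        rw [add_comm]
      simp [sub_apply, one_apply, this]
    have hnmN : nm ∈ LinearMap.ker ((J + 1 : H →L[ℂ] H) : H →ₗ[ℂ] H) := by
      rw [LinearMap.mem_ker]
      have : J nm = -nm := by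
        rw [hnm_def, map_smul, map_sub, hJJ, ← smul_neg, neg_sub]
      simp [add_apply, one_apply, this]
    have hsplit : n = np + nm := by
      rw [hnp_def, hnm_def]
      module
    have hJn : J n = np - nm := by
      rw [hnp_def, hnm_def, ← smul_sub]
      have : (n + J n) - (n - J n) = (2:ℂ) • J n := by module
      rw [this, smul_smul]
      norm_num
    have hcross : ⟪np, nm⟫ = 0 := horth np hnpP nm hnmN
    have hcross' : ⟪nm, np⟫ = 0 := by rw [← inner_conj_symm, hcross]; simp
    have hmmnp : ⟪mm, np⟫ = 0 := by rw [← inner_conj_symm, horth np hnpP mm hmm]; simp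
    have hnorm2 : ‖np‖ ^ 2 + ‖nm‖ ^ 2 = 1 := by
      have h := norm_add_sq (𝕜 := ℂ) np nm
      rw [hcross, ← hsplit, hn1] at h
      simp at h
      linarith
    have heq : ‖np‖ ^ 2 = ‖nm‖ ^ 2 := by
      have h0 : ⟪J n, n⟫ = ⟪np, np⟫ - ⟪nm, nm⟫ := by
        rw [hJn, hsplit, inner_sub_left, inner_add_right, inner_add_right, hcross, hcross']
        ring
      rw [hn0] at h0
      have h : ⟪np, np⟫ = ⟪nm, nm⟫ := by linear_combination -h0
      rw [inner_self_eq_norm_sq_to_K, inner_self_eq_norm_sq_to_K] at h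
      exact_mod_cast h
    have hnp2 : ‖np‖ ^ 2 = 2⁻¹ := by linarith
    have hnm2 : ‖nm‖ ^ 2 = 2⁻¹ := by linarith
    have hnpv : ‖np‖ = (Real.sqrt 2)⁻¹ := by
      rw [← Real.sqrt_sq (norm_nonneg np), hnp2, ← Real.sqrt_inv]
    have hnmv : ‖nm‖ = (Real.sqrt 2)⁻¹ := by
      rw [← Real.sqrt_sq (norm_nonneg nm), hnm2, ← Real.sqrt_inv]
    have hdecomp : ⟪m, n⟫ = ⟪mp, np⟫ + ⟪mm, nm⟫ := by
      rw [hsum, hsplit, inner_add_left, inner_add_right, inner_add_right,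
        horth mp hmp nm hnmN, hmmnp]
      simp
    calc ‖⟪m, n⟫‖ ≤ ‖⟪mp, np⟫‖ + ‖⟪mm, nm⟫‖ := by rw [hdecomp]; exact norm_add_le _ _
      _ ≤ ‖mp‖ * ‖np‖ + ‖mm‖ * ‖nm‖ :=
          add_le_add (norm_inner_le_norm _ _) (norm_inner_le_norm _ _)
      _ = 1 / Real.sqrt 2 * (‖mp‖ + ‖mm‖) := by rw [hnpv, hnmv, one_div]; ring
  exact IsGreatest.csSup_eq ⟨hcmem, hub⟩


end KreinFrames
end
end

section
/- Let H be a Krein space with fundamental symmetry J whose eigenspaces H± = ker(J ∓ I) are both nonzero, and let M ≠ {0} be a J-nonnegative (or J-nonpositive) subspace of H with definiteness bound α, i.e. α is the largest constant in [0,1] such that α‖f‖² ≤ [f,f] for all f ∈ M (resp. [f,f] ≤ −α‖f‖² for all f ∈ M). Then c₀(M, C) = (1/√2)(√((1+α)/2) + √((1−α)/2)). In particular, M is uniformly J-definite if and only if c₀(M, C) < 1. -/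
/- Frames for Krein spaces ("J-frames"), following Giribet–Maestripieri–Martínez Pería–Massey.

A Krein space is modelled as a complex Hilbert space `H` together with a fundamental symmetry
`J : H →L[ℂ] H` (selfadjoint, `J ∘L J = 1`); the indefinite inner product is `[x,y] = ⟪J x, y⟫`. -/

noncomputable section

open scoped ComplexInnerProductSpace ComplexOrder
open ContinuousLinearMap

attribute [local instance] Classical.propDecidable

namespace KreinFrames

universe u

variable {H : Type*} [NormedAddCommGroup H] [InnerProductSpace ℂ H]

variable [CompleteSpace H]

set_option linter.unusedSectionVars false

lemma symm_inner (J : H →L[ℂ] H) (hJsa : IsSelfAdjoint J) (x y : H) :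
    ⟪J x, y⟫ = ⟪x, J y⟫ := by
  conv_lhs => rw [← hJsa.adjoint_eq]
  exact ContinuousLinearMap.adjoint_inner_left J y x

lemma orth_pm (J : H →L[ℂ] H) (hJsa : IsSelfAdjoint J) {u v : H}
    (hu : J u = u) (hv : J v = -v) : ⟪u, v⟫ = 0 := by
  have h : ⟪u, v⟫ = -⟪u, v⟫ := by
    calc ⟪u, v⟫ = ⟪J u, v⟫ := by rw [hu]
    _ = ⟪u, J v⟫ := symm_inner J hJsa u v
    _ = -⟪u, v⟫ := by rw [hv, inner_neg_right]
  have h2 : (2:ℂ) * ⟪u, v⟫ = 0 := by linear_combination h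
  exact (mul_eq_zero.mp h2).resolve_left two_ne_zero

lemma orth_mp (J : H →L[ℂ] H) (hJsa : IsSelfAdjoint J) {u v : H}
    (hu : J u = u) (hv : J v = -v) : ⟪v, u⟫ = 0 := by
  rw [← inner_conj_symm, orth_pm J hJsa hu hv, map_zero]

lemma decomp (J : H →L[ℂ] H) (hJsq : J ∘L J = 1) (x : H) :
    J ((2:ℂ)⁻¹ • (x + J x)) = (2:ℂ)⁻¹ • (x + J x) ∧
    J ((2:ℂ)⁻¹ • (x - J x)) = -((2:ℂ)⁻¹ • (x - J x)) ∧
    x = (2:ℂ)⁻¹ • (x + J x) + (2:ℂ)⁻¹ • (x - J x) := by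
  have hJJ : J (J x) = x := by
    have := ContinuousLinearMap.ext_iff.mp hJsq x
    simpa using this
  refine ⟨?_, ?_, ?_⟩
  · rw [map_smul, map_add, hJJ, add_comm]
  · rw [map_smul, map_sub, hJJ, ← smul_neg, neg_sub]
  · rw [← smul_add]
    rw [show x + J x + (x - J x) = (2:ℂ) • x by module]
    rw [smul_smul]
    norm_num


lemma norm_sq_add (J : H →L[ℂ] H) (hJsa : IsSelfAdjoint J) {p q : H}
    (hp : J p = p) (hq : J q = -q) : ‖p + q‖ ^ 2 = ‖p‖ ^ 2 + ‖q‖ ^ 2 := by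
  have h := norm_add_sq (𝕜 := ℂ) p q
  rw [orth_pm J hJsa hp hq] at h
  simpa using h

lemma jform_expand (J : H →L[ℂ] H) (hJsa : IsSelfAdjoint J) {p q : H}
    (hp : J p = p) (hq : J q = -q) :
    ⟪J (p + q), p + q⟫ = ⟪p, p⟫ - ⟪q, q⟫ := by
  rw [map_add, hp, hq]
  rw [inner_add_left, inner_add_right, inner_add_right, inner_neg_left, inner_neg_left,
    orth_pm J hJsa hp hq, orth_mp J hJsa hp hq]
  ring

lemma jform_zero (J : H →L[ℂ] H) (hJsa : IsSelfAdjoint J) {p q : H}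
    (hp : J p = p) (hq : J q = -q) (hnorm : ‖p‖ = ‖q‖) :
    ⟪J (p + q), p + q⟫ = 0 := by
  rw [jform_expand J hJsa hp hq, inner_self_eq_norm_sq_to_K, inner_self_eq_norm_sq_to_K,
    hnorm, sub_self]

lemma jform_re (J : H →L[ℂ] H) (hJsa : IsSelfAdjoint J) {p q : H}
    (hp : J p = p) (hq : J q = -q) :
    (⟪J (p + q), p + q⟫).re = ‖p‖ ^ 2 - ‖q‖ ^ 2 := by
  rw [jform_expand J hJsa hp hq, Complex.sub_re]
  have h1 : (⟪p, p⟫).re = ‖p‖ ^ 2 := inner_self_eq_norm_sq (𝕜 := ℂ) p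
  have h2 : (⟪q, q⟫).re = ‖q‖ ^ 2 := inner_self_eq_norm_sq (𝕜 := ℂ) q
  rw [h1, h2]

lemma norm_eq_sqrt2 (J : H →L[ℂ] H) (hJsa : IsSelfAdjoint J) {p q : H}
    (hp : J p = p) (hq : J q = -q) (hp1 : ‖p‖ = 1) (hq1 : ‖q‖ = 1) :
    ‖p + q‖ = Real.sqrt 2 := by
  have h := norm_sq_add J hJsa hp hq
  rw [hp1, hq1] at h
  have : ‖p + q‖ ^ 2 = 2 := by rw [h]; norm_num
  rw [← this, Real.sqrt_sq (norm_nonneg _)]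

lemma neutral_construct (J : H →L[ℂ] H) (hJsa : IsSelfAdjoint J) {p q : H}
    (hp : J p = p) (hq : J q = -q) (hp1 : ‖p‖ = 1) (hq1 : ‖q‖ = 1) :
    ⟪J ((((Real.sqrt 2 : ℝ) : ℂ))⁻¹ • (p + q)), (((Real.sqrt 2 : ℝ) : ℂ))⁻¹ • (p + q)⟫ = 0 ∧
    ‖(((Real.sqrt 2 : ℝ) : ℂ))⁻¹ • (p + q)‖ = 1 ∧
    ∀ m : H, ⟪m, (((Real.sqrt 2 : ℝ) : ℂ))⁻¹ • (p + q)⟫ =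
      (((Real.sqrt 2 : ℝ) : ℂ))⁻¹ * (⟪m, p⟫ + ⟪m, q⟫) := by
  have hs : (0:ℝ) < Real.sqrt 2 := Real.sqrt_pos.mpr (by norm_num)
  refine ⟨?_, ?_, ?_⟩
  · rw [map_smul, inner_smul_left, inner_smul_right,
      jform_zero J hJsa hp hq (by rw [hp1, hq1]), mul_zero, mul_zero]
  · rw [norm_smul, norm_eq_sqrt2 J hJsa hp hq hp1 hq1, norm_inv]
    rw [Complex.norm_real, Real.norm_eq_abs, abs_of_nonneg hs.le, inv_mul_cancel₀ hs.ne']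
  · intro m
    rw [inner_smul_right, inner_add_right]

lemma sq_eq_of {x y : ℝ} (hx : 0 ≤ x) (hy : 0 ≤ y) (h : x^2 = y^2) : x = y := by
  rw [← Real.sqrt_sq hx, ← Real.sqrt_sq hy, h]

lemma sq_le_of {x y : ℝ} (hx : 0 ≤ x) (hy : 0 ≤ y) (h : x^2 ≤ y^2) : x ≤ y := by
  have := Real.sqrt_le_sqrt h
  rwa [Real.sqrt_sq hx, Real.sqrt_sq hy] at this

lemma key_ineq {α a b : ℝ} (hα0 : 0 ≤ α) (hα1 : α ≤ 1) (ha : 0 ≤ a) (hb : 0 ≤ b)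
    (hab : a^2 + b^2 = 1) (hd : α ≤ a^2 - b^2) :
    a + b ≤ Real.sqrt ((1+α)/2) + Real.sqrt ((1-α)/2) := by
  set u := Real.sqrt ((1+α)/2) with hu
  set v := Real.sqrt ((1-α)/2) with hv
  have hu0 : 0 ≤ u := Real.sqrt_nonneg _
  have hv0 : 0 ≤ v := Real.sqrt_nonneg _
  have hu2 : u^2 = (1+α)/2 := Real.sq_sqrt (by linarith)
  have hv2 : v^2 = (1-α)/2 := Real.sq_sqrt (by linarith)
  have hupos : 0 < u := by nlinarith
  have hua : u ≤ a := sq_le_of hu0 ha (by nlinarith)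
  have hbv : b ≤ v := sq_le_of hb hv0 (by nlinarith)
  have hvu : v ≤ u := sq_le_of hv0 hu0 (by nlinarith)
  have hbase : a^2 - u^2 = v^2 - b^2 := by linarith
  have hcmp : (a-u)*(v+b) ≤ (v-b)*(v+b) := by
    calc (a-u)*(v+b) ≤ (a-u)*(a+u) := by
          apply mul_le_mul_of_nonneg_left (by linarith) (by linarith)
    _ = (v-b)*(v+b) := by linear_combination hbase
  rcases eq_or_lt_of_le (by positivity : (0:ℝ) ≤ v + b) with h0 | h0
  · have hv0' : v = 0 := by linarith
    have hb0 : b = 0 := by linarith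
    have : a ≤ u := by nlinarith
    linarith
  · have := le_of_mul_le_mul_right hcmp h0
    linarith

lemma t_lt_one_iff {α : ℝ} (hα0 : 0 ≤ α) (hα1 : α ≤ 1) :
    1 / Real.sqrt 2 * (Real.sqrt ((1+α)/2) + Real.sqrt ((1-α)/2)) < 1 ↔ 0 < α := by
  set s := Real.sqrt 2 with hsdef
  set u := Real.sqrt ((1+α)/2) with hu
  set v := Real.sqrt ((1-α)/2) with hv
  have hs0 : 0 < s := Real.sqrt_pos.mpr (by norm_num)
  have hs2 : s^2 = 2 := Real.sq_sqrt (by norm_num)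
  have hu0 : 0 ≤ u := Real.sqrt_nonneg _
  have hv0 : 0 ≤ v := Real.sqrt_nonneg _
  have hu2 : u^2 = (1+α)/2 := Real.sq_sqrt (by linarith)
  have hv2 : v^2 = (1-α)/2 := Real.sq_sqrt (by linarith)
  rw [div_mul_eq_mul_div, one_mul, div_lt_one hs0]
  constructor
  · intro h
    by_contra hc
    push_neg at hc
    have hα : α = 0 := le_antisymm hc hα0
    subst hα
    have huv : u = v := sq_eq_of hu0 hv0 (by rw [hu2, hv2]; norm_num)
    have : u + v = s := sq_eq_of (by linarith) hs0.le (by nlinarith)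
    linarith
  · intro h
    have huv : u*v < 1/2 := by nlinarith [mul_nonneg hu0 hv0, sq_nonneg (u*v)]
    nlinarith [mul_nonneg hu0 hv0]

lemma pair_p (J : H →L[ℂ] H) (hJsa : IsSelfAdjoint J) {p q : H}
    (hp : J p = p) (hq : J q = -q) (c : ℝ) :
    ⟪p + q, ((c:ℝ):ℂ) • p⟫ = ((c * ‖p‖^2 : ℝ) : ℂ) := by
  rw [inner_add_left, inner_smul_right, inner_smul_right, orth_mp J hJsa hp hq,
    inner_self_eq_norm_sq_to_K]
  push_cast
  ring_nf
  rfl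

lemma pair_q (J : H →L[ℂ] H) (hJsa : IsSelfAdjoint J) {p q : H}
    (hp : J p = p) (hq : J q = -q) (c : ℝ) :
    ⟪p + q, ((c:ℝ):ℂ) • q⟫ = ((c * ‖q‖^2 : ℝ) : ℂ) := by
  rw [inner_add_left, inner_smul_right, inner_smul_right, orth_pm J hJsa hp hq,
    inner_self_eq_norm_sq_to_K]
  push_cast
  ring_nf
  rfl


set_option maxHeartbeats 1000000 in
lemma main_eq (J : H →L[ℂ] H) (hJsa : IsSelfAdjoint J) (hJsq : J ∘L J = 1)
    (hm : LinearMap.ker ((J + 1 : H →L[ℂ] H) : H →ₗ[ℂ] H) ≠ ⊥)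
    (M : Submodule ℂ H) (hM : M ≠ ⊥) (α : ℝ) (hα01 : α ∈ Set.Icc (0:ℝ) 1)
    (h1 : ∀ x ∈ M, α * ‖x‖ ^ 2 ≤ (⟪J x, x⟫).re)
    (h2 : ∀ β ∈ Set.Icc (0:ℝ) 1, (∀ x ∈ M, β * ‖x‖ ^ 2 ≤ (⟪J x, x⟫).re) → β ≤ α) :
    c0 J M = 1 / Real.sqrt 2 * (Real.sqrt ((1 + α) / 2) + Real.sqrt ((1 - α) / 2)) := by
  obtain ⟨hα0, hα1⟩ := hα01
  set s := Real.sqrt 2 with hsdef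
  set u := Real.sqrt ((1+α)/2) with hudef
  set v := Real.sqrt ((1-α)/2) with hvdef
  have hs0 : (0:ℝ) < s := Real.sqrt_pos.mpr (by norm_num)
  have hs2 : s^2 = 2 := Real.sq_sqrt (by norm_num)
  have hu0 : 0 ≤ u := Real.sqrt_nonneg _
  have hv0 : 0 ≤ v := Real.sqrt_nonneg _
  have hu2 : u^2 = (1+α)/2 := Real.sq_sqrt (by linarith)
  have hv2 : v^2 = (1-α)/2 := Real.sq_sqrt (by linarith)
  set S := {r : ℝ | ∃ m ∈ M, ∃ n : H, ⟪J n, n⟫ = 0 ∧ ‖m‖ = 1 ∧ ‖n‖ = 1 ∧ r = ‖⟪m, n⟫‖}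
    with hSdef
  have hbddS : BddAbove S := by
    refine ⟨1, ?_⟩
    rintro r ⟨m, hmM, n, hn0, hm1, hn1, rfl⟩
    calc ‖⟪m, n⟫‖ ≤ ‖m‖ * ‖n‖ := norm_inner_le_norm m n
    _ = 1 := by rw [hm1, hn1, one_mul]
  have hub : ∀ r ∈ S, r ≤ 1/s * (u + v) := by
    rintro r ⟨m, hmM, n, hn0, hm1, hn1, rfl⟩
    obtain ⟨hJp, hJq, hmpq⟩ := decomp J hJsq m
    set p := (2:ℂ)⁻¹ • (m + J m) with hpdef
    set q := (2:ℂ)⁻¹ • (m - J m) with hqdef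
    obtain ⟨hJp', hJq', hnpq⟩ := decomp J hJsq n
    set p' := (2:ℂ)⁻¹ • (n + J n) with hpdef'
    set q' := (2:ℂ)⁻¹ • (n - J n) with hqdef'
    set a := ‖p‖ with hadef
    set b := ‖q‖ with hbdef
    set c := ‖p'‖ with hcdef
    set d := ‖q'‖ with hddef
    have ha : 0 ≤ a := norm_nonneg _
    have hb : 0 ≤ b := norm_nonneg _
    have hc : 0 ≤ c := norm_nonneg _
    have hd : 0 ≤ d := norm_nonneg _
    have hab : a^2 + b^2 = 1 := by
      have h := norm_sq_add J hJsa hJp hJq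
      rw [← hmpq, hm1] at h
      rw [← h]; norm_num
    have hcd : c^2 + d^2 = 1 := by
      have h := norm_sq_add J hJsa hJp' hJq'
      rw [← hnpq, hn1] at h
      rw [← h]; norm_num
    have hre : (⟪J m, m⟫).re = a^2 - b^2 := by
      conv_lhs => rw [hmpq]
      exact jform_re J hJsa hJp hJq
    have hdm : α ≤ a^2 - b^2 := by
      have := h1 m hmM
      rw [hm1, hre] at this
      linarith
    have hre' : c^2 - d^2 = 0 := by
      have : (⟪J n, n⟫).re = c^2 - d^2 := by
        conv_lhs => rw [hnpq]
        exact jform_re J hJsa hJp' hJq'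
      rw [hn0] at this
      simpa using this.symm
    have hc2 : c^2 = 1/2 := by linarith
    have hd2 : d^2 = 1/2 := by linarith
    have hsplit : ⟪m, n⟫ = ⟪p, p'⟫ + ⟪q, q'⟫ := by
      rw [hmpq, hnpq, inner_add_left, inner_add_right, inner_add_right,
        orth_pm J hJsa hJp hJq', orth_mp J hJsa hJp' hJq]
      ring
    have hbound : ‖⟪m, n⟫‖ ≤ a * c + b * d := by
      rw [hsplit]
      refine le_trans (norm_add_le _ _) ?_
      exact add_le_add (norm_inner_le_norm _ _) (norm_inner_le_norm _ _)
    have hceq : c = s⁻¹ := sq_eq_of hc (inv_nonneg.mpr hs0.le) (by rw [hc2, inv_pow, hs2]; norm_num)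
    have hdeq : d = s⁻¹ := sq_eq_of hd (inv_nonneg.mpr hs0.le) (by rw [hd2, inv_pow, hs2]; norm_num)
    have hkey : a + b ≤ u + v := key_ineq hα0 hα1 ha hb hab hdm
    calc ‖⟪m, n⟫‖ ≤ a * c + b * d := hbound
    _ = (a + b) * s⁻¹ := by rw [hceq, hdeq]; ring
    _ ≤ (u + v) * s⁻¹ := by
        exact mul_le_mul_of_nonneg_right hkey (inv_nonneg.mpr hs0.le)
    _ = 1/s * (u + v) := by ring
  have hexists : ∀ ε : ℝ, 0 < ε → ∃ r ∈ S, 1/s * (u + v) - ε ≤ r := by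
    intro ε hε
    rcases eq_or_lt_of_le hα1 with hα1' | hα1'
    · -- α = 1
      obtain ⟨m₀, hm₀M, hm₀⟩ := Submodule.exists_mem_ne_zero_of_ne_bot hM
      have hm₀n : (0:ℝ) < ‖m₀‖ := norm_pos_iff.mpr hm₀
      set m := ((‖m₀‖⁻¹ : ℝ) : ℂ) • m₀ with hmdef
      have hmM : m ∈ M := M.smul_mem _ hm₀M
      have hm1 : ‖m‖ = 1 := by
        rw [hmdef, norm_smul, Complex.norm_real, Real.norm_eq_abs,
          abs_of_nonneg (inv_nonneg.mpr hm₀n.le), inv_mul_cancel₀ hm₀n.ne']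
      -- show J m = m
      obtain ⟨hJp, hJq, hmpq⟩ := decomp J hJsq m
      set p := (2:ℂ)⁻¹ • (m + J m) with hpdef
      set q := (2:ℂ)⁻¹ • (m - J m) with hqdef
      have hab : ‖p‖^2 + ‖q‖^2 = 1 := by
        have h := norm_sq_add J hJsa hJp hJq
        rw [← hmpq, hm1] at h
        rw [← h]; norm_num
      have hre : (⟪J m, m⟫).re = ‖p‖^2 - ‖q‖^2 := by
        conv_lhs => rw [hmpq]
        exact jform_re J hJsa hJp hJq
      have hdm : α ≤ ‖p‖^2 - ‖q‖^2 := by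
        have := h1 m hmM
        rw [hm1, hre] at this
        linarith
      have hq0 : q = 0 := by
        have : ‖q‖^2 ≤ 0 := by rw [hα1'] at hdm; linarith
        have : ‖q‖ = 0 := by nlinarith [norm_nonneg q]
        exact norm_eq_zero.mp this
      have hJm : J m = m := by
        conv_lhs => rw [hmpq, hq0, add_zero, hJp]
        rw [hmpq, hq0, add_zero]
      -- get a unit vector in the negative eigenspace
      obtain ⟨w, hwK, hw0⟩ := Submodule.exists_mem_ne_zero_of_ne_bot hm
      have hwn : (0:ℝ) < ‖w‖ := norm_pos_iff.mpr hw0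
      have hJw : J w = -w := by
        have h := LinearMap.mem_ker.mp hwK
        have h2 : J w + w = 0 := by simpa using h
        exact eq_neg_of_add_eq_zero_left h2
      set e := ((‖w‖⁻¹ : ℝ) : ℂ) • w with hedef
      have hJe : J e = -e := by rw [hedef, map_smul, hJw, smul_neg]
      have he1 : ‖e‖ = 1 := by
        rw [hedef, norm_smul, Complex.norm_real, Real.norm_eq_abs,
          abs_of_nonneg (inv_nonneg.mpr hwn.le), inv_mul_cancel₀ hwn.ne']
      obtain ⟨hn0, hn1, hpair⟩ := neutral_construct J hJsa hJm hJe hm1 he1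
      set n := (((Real.sqrt 2 : ℝ) : ℂ))⁻¹ • (m + e) with hndef
      have hinner : ⟪m, n⟫ = ((s⁻¹ : ℝ) : ℂ) := by
        rw [hpair m, orth_pm J hJsa hJm hJe, add_zero, inner_self_eq_norm_sq_to_K, hm1]
        push_cast
        norm_num
        exact hsdef.symm
      refine ⟨‖⟪m, n⟫‖, ⟨m, hmM, n, hn0, hm1, hn1, rfl⟩, ?_⟩
      rw [hinner, Complex.norm_real, Real.norm_eq_abs, abs_of_nonneg (inv_nonneg.mpr hs0.le)]
      have hueq : u = 1 := by
        rw [hudef, hα1', show (1+(1:ℝ))/2 = 1 by norm_num, Real.sqrt_one]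
      have hveq : v = 0 := by
        rw [hvdef, hα1', show (1-(1:ℝ))/2 = 0 by norm_num, Real.sqrt_zero]
      rw [hueq, hveq, one_div]
      linarith
    · -- α < 1
      set δ := min ((1-α)/2) (ε^2) with hδdef
      have hδ0 : 0 < δ := lt_min (by linarith) (by positivity)
      have hδ1 : δ ≤ (1-α)/2 := min_le_left _ _
      have hδ2 : δ ≤ ε^2 := min_le_right _ _
      set β := α + δ with hβdef
      have hβmem : β ∈ Set.Icc (0:ℝ) 1 := ⟨by linarith, by linarith⟩
      have hfail : ¬ ∀ x ∈ M, β * ‖x‖ ^ 2 ≤ (⟪J x, x⟫).re := by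
        intro h
        have := h2 β hβmem h
        linarith
      push_neg at hfail
      obtain ⟨x, hxM, hx⟩ := hfail
      have hx0 : x ≠ 0 := by
        rintro rfl
        simp at hx
      have hxn : (0:ℝ) < ‖x‖ := norm_pos_iff.mpr hx0
      set m := ((‖x‖⁻¹ : ℝ) : ℂ) • x with hmdef
      have hmM : m ∈ M := M.smul_mem _ hxM
      have hm1 : ‖m‖ = 1 := by
        rw [hmdef, norm_smul, Complex.norm_real, Real.norm_eq_abs,
          abs_of_nonneg (inv_nonneg.mpr hxn.le), inv_mul_cancel₀ hxn.ne']
      have hmre : (⟪J m, m⟫).re = ‖x‖⁻¹^2 * (⟪J x, x⟫).re := by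
        rw [hmdef, map_smul, inner_smul_left, inner_smul_right, ← mul_assoc,
          Complex.conj_ofReal, ← Complex.ofReal_mul, Complex.re_ofReal_mul]
        ring
      have hm_ub : (⟪J m, m⟫).re < β := by
        rw [hmre]
        calc ‖x‖⁻¹^2 * (⟪J x, x⟫).re < ‖x‖⁻¹^2 * (β * ‖x‖^2) := by
              apply mul_lt_mul_of_pos_left hx (by positivity)
        _ = β := by field_simp
      have hm_lb : α ≤ (⟪J m, m⟫).re := by
        have := h1 m hmM
        rw [hm1] at this
        linarith
      obtain ⟨hJp, hJq, hmpq⟩ := decomp J hJsq m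
      set p := (2:ℂ)⁻¹ • (m + J m) with hpdef
      set q := (2:ℂ)⁻¹ • (m - J m) with hqdef
      set a := ‖p‖ with hadef
      set b := ‖q‖ with hbdef
      have ha : 0 ≤ a := norm_nonneg _
      have hb : 0 ≤ b := norm_nonneg _
      have hab : a^2 + b^2 = 1 := by
        have h := norm_sq_add J hJsa hJp hJq
        rw [← hmpq, hm1] at h
        rw [← h]; norm_num
      have hre : (⟪J m, m⟫).re = a^2 - b^2 := by
        conv_lhs => rw [hmpq]
        exact jform_re J hJsa hJp hJq
      have hdm : α ≤ a^2 - b^2 := by rw [← hre]; exact hm_lb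
      have hdm' : a^2 - b^2 < α + δ := by rw [← hre]; exact hm_ub
      have hapos : 0 < a := by nlinarith
      have hbpos : 0 < b := by nlinarith
      set np := ((a⁻¹ : ℝ) : ℂ) • p with hnpdef
      set nm := ((b⁻¹ : ℝ) : ℂ) • q with hnmdef
      have hJnp : J np = np := by rw [hnpdef, map_smul, hJp]
      have hJnm : J nm = -nm := by rw [hnmdef, map_smul, hJq, smul_neg]
      have hnp1 : ‖np‖ = 1 := by
        rw [hnpdef, norm_smul, Complex.norm_real, Real.norm_eq_abs,
          abs_of_nonneg (inv_nonneg.mpr ha), inv_mul_cancel₀ hapos.ne']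
      have hnm1 : ‖nm‖ = 1 := by
        rw [hnmdef, norm_smul, Complex.norm_real, Real.norm_eq_abs,
          abs_of_nonneg (inv_nonneg.mpr hb), inv_mul_cancel₀ hbpos.ne']
      obtain ⟨hn0, hn1, hpair⟩ := neutral_construct J hJsa hJnp hJnm hnp1 hnm1
      set n := (((Real.sqrt 2 : ℝ) : ℂ))⁻¹ • (np + nm) with hndef
      have haC : (a:ℂ) ≠ 0 := Complex.ofReal_ne_zero.mpr hapos.ne'
      have hbC : (b:ℂ) ≠ 0 := Complex.ofReal_ne_zero.mpr hbpos.ne'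
      have hip : ⟪m, np⟫ = ((a : ℝ) : ℂ) := by
        rw [hmpq, hnpdef, pair_p J hJsa hJp hJq a⁻¹]
        congr 1
        rw [← hadef]
        field_simp
      have hiq : ⟪m, nm⟫ = ((b : ℝ) : ℂ) := by
        rw [hmpq, hnmdef, pair_q J hJsa hJp hJq b⁻¹]
        congr 1
        rw [← hbdef]
        field_simp
      have hinner : ⟪m, n⟫ = ((s⁻¹ * (a + b) : ℝ) : ℂ) := by
        rw [hpair m, hip, hiq]
        push_cast
        ring
      refine ⟨‖⟪m, n⟫‖, ⟨m, hmM, n, hn0, hm1, hn1, rfl⟩, ?_⟩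
      rw [hinner, Complex.norm_real, Real.norm_eq_abs,
        abs_of_nonneg (by positivity)]
      have hua : u ≤ a := sq_le_of hu0 ha (by nlinarith)
      have hvb : v ≤ b + ε := sq_le_of hv0 (by positivity) (by nlinarith)
      have hsinv0 : (0:ℝ) < s⁻¹ := inv_pos.mpr hs0
      have hs1 : (1:ℝ) ≤ s := by nlinarith
      have hsinvle : s⁻¹ ≤ 1 := inv_le_one_of_one_le₀ hs1
      have hkey : u + v ≤ a + b + ε := by linarith
      have h1' : s⁻¹ * (u + v) ≤ s⁻¹ * (a + b + ε) :=
        mul_le_mul_of_nonneg_left hkey hsinv0.le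
      have h2' : s⁻¹ * ε ≤ ε := by
        calc s⁻¹ * ε ≤ 1 * ε := mul_le_mul_of_nonneg_right hsinvle hε.le
        _ = ε := one_mul ε
      have : s⁻¹ * (a + b + ε) = s⁻¹ * (a + b) + s⁻¹ * ε := by ring
      rw [one_div]
      linarith
  refine le_antisymm (Real.sSup_le hub (by positivity)) ?_
  refine le_of_forall_sub_le ?_
  intro ε hε
  obtain ⟨r, hrS, hr⟩ := hexists ε hε
  have := le_csSup hbddS hrS
  calc 1/s * (u + v) - ε ≤ r := hr
  _ ≤ sSup S := this



lemma statement_aux (J : H →L[ℂ] H) (hJsa : IsSelfAdjoint J) (hJsq : J ∘L J = 1)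
    (hm : LinearMap.ker ((J + 1 : H →L[ℂ] H) : H →ₗ[ℂ] H) ≠ ⊥)
    (M : Submodule ℂ H) (hM : M ≠ ⊥) (α : ℝ) (hα01 : α ∈ Set.Icc (0:ℝ) 1)
    (h1 : ∀ x ∈ M, α * ‖x‖ ^ 2 ≤ (⟪J x, x⟫).re)
    (h2 : ∀ β ∈ Set.Icc (0:ℝ) 1, (∀ x ∈ M, β * ‖x‖ ^ 2 ≤ (⟪J x, x⟫).re) → β ≤ α) :
    c0 J M = 1 / Real.sqrt 2 * (Real.sqrt ((1 + α) / 2) + Real.sqrt ((1 - α) / 2)) ∧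
      ((UnifJPos J M ∨ UnifJNeg J M) ↔ c0 J M < 1) := by
  obtain ⟨hα0, hα1⟩ := hα01
  have heq := main_eq J hJsa hJsq hm M hM α ⟨hα0, hα1⟩ h1 h2
  refine ⟨heq, ?_⟩
  rw [heq, t_lt_one_iff hα0 hα1]
  constructor
  · rintro (⟨β, hβ0, hβ⟩ | ⟨β, hβ0, hβ⟩)
    · have hmem : min β 1 ∈ Set.Icc (0:ℝ) 1 :=
        ⟨le_min hβ0.le zero_le_one, min_le_right _ _⟩
      have hle : min β 1 ≤ α := by
        refine h2 _ hmem fun x hx => le_trans ?_ (hβ x hx)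
        have := min_le_left β 1
        nlinarith [sq_nonneg ‖x‖]
      have : 0 < min β 1 := lt_min hβ0 one_pos
      linarith
    · exfalso
      obtain ⟨x₀, hx₀M, hx₀⟩ := Submodule.exists_mem_ne_zero_of_ne_bot hM
      have h₁ := h1 x₀ hx₀M
      have h₂ := hβ x₀ hx₀M
      have hn : (0:ℝ) < ‖x₀‖ := norm_pos_iff.mpr hx₀
      have hh1 : 0 ≤ α * ‖x₀‖ ^ 2 := mul_nonneg hα0 (sq_nonneg _)
      have hh2 : 0 < β * ‖x₀‖ ^ 2 := mul_pos hβ0 (pow_pos hn 2)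
      linarith
  · intro h
    exact Or.inl ⟨α, h, h1⟩

/-- the minimal angle between a `J`-semidefinite subspace with definiteness bound
`α` and the neutral cone: `c₀(M,C) = (1/√2)(√((1+α)/2) + √((1-α)/2))`; `M` is uniformly
`J`-definite iff `c₀(M,C) < 1`. -/
theorem statement7 {H : Type*} [NormedAddCommGroup H] [InnerProductSpace ℂ H] [CompleteSpace H]
    (J : H →L[ℂ] H) (hJsa : IsSelfAdjoint J) (hJsq : J ∘L J = 1)
    (hp : LinearMap.ker ((J - 1 : H →L[ℂ] H) : H →ₗ[ℂ] H) ≠ ⊥) (hm : LinearMap.ker ((J + 1 : H →L[ℂ] H) : H →ₗ[ℂ] H) ≠ ⊥)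
    (M : Submodule ℂ H) (hM : M ≠ ⊥) (α : ℝ) (hα01 : α ∈ Set.Icc (0:ℝ) 1)
    (hcase :
      ((∀ x ∈ M, α * ‖x‖ ^ 2 ≤ (⟪J x, x⟫).re) ∧
        ∀ β ∈ Set.Icc (0:ℝ) 1, (∀ x ∈ M, β * ‖x‖ ^ 2 ≤ (⟪J x, x⟫).re) → β ≤ α) ∨
      ((∀ x ∈ M, (⟪J x, x⟫).re ≤ -(α * ‖x‖ ^ 2)) ∧
        ∀ β ∈ Set.Icc (0:ℝ) 1, (∀ x ∈ M, (⟪J x, x⟫).re ≤ -(β * ‖x‖ ^ 2)) → β ≤ α)) :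
    c0 J M = 1 / Real.sqrt 2 * (Real.sqrt ((1 + α) / 2) + Real.sqrt ((1 - α) / 2)) ∧
      ((UnifJPos J M ∨ UnifJNeg J M) ↔ c0 J M < 1) := by
  rcases hcase with ⟨h1, h2⟩ | ⟨h1, h2⟩
  · exact statement_aux J hJsa hJsq hm M hM α hα01 h1 h2
  · have hJsa' : IsSelfAdjoint (-J) := hJsa.neg
    have hJsq' : (-J) ∘L (-J) = 1 := by
      rw [ContinuousLinearMap.neg_comp, ContinuousLinearMap.comp_neg, neg_neg, hJsq]
    have hm' : LinearMap.ker (((-J) + 1 : H →L[ℂ] H) : H →ₗ[ℂ] H) ≠ ⊥ := by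
      have hker : LinearMap.ker (((-J) + 1 : H →L[ℂ] H) : H →ₗ[ℂ] H) = LinearMap.ker ((J - 1 : H →L[ℂ] H) : H →ₗ[ℂ] H) := by
        ext x
        rw [LinearMap.mem_ker, LinearMap.mem_ker]
        show -(J x) + x = 0 ↔ J x - x = 0
        rw [neg_add_eq_zero, sub_eq_zero]
      rw [hker]
      exact hp
    have h1' : ∀ x ∈ M, α * ‖x‖ ^ 2 ≤ (⟪(-J) x, x⟫).re := by
      intro x hx
      have := h1 x hx
      rw [ContinuousLinearMap.neg_apply, inner_neg_left, Complex.neg_re]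
      linarith
    have h2' : ∀ β ∈ Set.Icc (0:ℝ) 1,
        (∀ x ∈ M, β * ‖x‖ ^ 2 ≤ (⟪(-J) x, x⟫).re) → β ≤ α := by
      intro β hβ h
      refine h2 β hβ fun x hx => ?_
      have := h x hx
      rw [ContinuousLinearMap.neg_apply, inner_neg_left, Complex.neg_re] at this
      linarith
    obtain ⟨heq, hiff⟩ := statement_aux (-J) hJsa' hJsq' hm' M hM α hα01 h1' h2'
    have hc0 : c0 J M = c0 (-J) M := by
      unfold c0
      congr 1
      ext r
      constructor
      · rintro ⟨m, hmM, n, h0, a, b, rfl⟩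
        refine ⟨m, hmM, n, ?_, a, b, rfl⟩
        rw [ContinuousLinearMap.neg_apply, inner_neg_left, neg_eq_zero]
        exact h0
      · rintro ⟨m, hmM, n, h0, a, b, rfl⟩
        refine ⟨m, hmM, n, ?_, a, b, rfl⟩
        rw [ContinuousLinearMap.neg_apply, inner_neg_left, neg_eq_zero] at h0
        exact h0
    have hswap : (UnifJPos J M ∨ UnifJNeg J M) ↔ (UnifJPos (-J) M ∨ UnifJNeg (-J) M) := by
      have e1 : UnifJPos (-J) M ↔ UnifJNeg J M := by
        constructor
        · rintro ⟨β, hβ0, hβ⟩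
          refine ⟨β, hβ0, fun x hx => ?_⟩
          have := hβ x hx
          rw [ContinuousLinearMap.neg_apply, inner_neg_left, Complex.neg_re] at this
          linarith
        · rintro ⟨β, hβ0, hβ⟩
          refine ⟨β, hβ0, fun x hx => ?_⟩
          have := hβ x hx
          rw [ContinuousLinearMap.neg_apply, inner_neg_left, Complex.neg_re]
          linarith
      have e2 : UnifJNeg (-J) M ↔ UnifJPos J M := by
        constructor
        · rintro ⟨β, hβ0, hβ⟩
          refine ⟨β, hβ0, fun x hx => ?_⟩
          have := hβ x hx
          rw [ContinuousLinearMap.neg_apply, inner_neg_left, Complex.neg_re] at this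
          linarith
        · rintro ⟨β, hβ0, hβ⟩
          refine ⟨β, hβ0, fun x hx => ?_⟩
          have := hβ x hx
          rw [ContinuousLinearMap.neg_apply, inner_neg_left, Complex.neg_re]
          linarith
      rw [e1, e2]
      exact or_comm
    rw [hc0]
    exact ⟨heq, hswap.trans hiff⟩


end KreinFrames
end
end

section
/- Let H₁, H₂ be complex Hilbert spaces, let T : H₁ → H₂ be a bounded surjective operator with Moore–Penrose inverse T† = T*(TT*)⁻¹, and let S be a closed subspace of H₁ with orthogonal projection P_S such that the Friedrichs angle satisfies c(S, N(T)^⊥) < 1. Then T P_S T† is a projection (i.e. (T P_S T†)² = T P_S T†) if and only if N(T) = (S ∩ N(T)) ⊕ (S^⊥ ∩ N(T)). -/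
/- Frames for Krein spaces ("J-frames"), following Giribet–Maestripieri–Martínez Pería–Massey.

A Krein space is modelled as a complex Hilbert space `H` together with a fundamental symmetry
`J : H →L[ℂ] H` (selfadjoint, `J ∘L J = 1`); the indefinite inner product is `[x,y] = ⟪J x, y⟫`. -/

noncomputable section

open scoped ComplexInnerProductSpace ComplexOrder
open ContinuousLinearMap

attribute [local instance] Classical.propDecidable

namespace KreinFrames

universe u

variable {H : Type*} [NormedAddCommGroup H] [InnerProductSpace ℂ H]

/-- for a surjective `T` and a closed subspace `S` with `c(S, N(T)^⊥) < 1`,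
`T P_S T†` is a projection iff `N(T) = (S ∩ N(T)) ⊕ (S^⊥ ∩ N(T))`. -/
theorem statement9 {H1 H2 : Type*} [NormedAddCommGroup H1] [InnerProductSpace ℂ H1]
    [CompleteSpace H1] [NormedAddCommGroup H2] [InnerProductSpace ℂ H2] [CompleteSpace H2]
    (T : H1 →L[ℂ] H2) (hsurj : Function.Surjective T)
    (R : H2 →L[ℂ] H2) (hR1 : (T ∘L adjoint T) ∘L R = 1) (hR2 : R ∘L (T ∘L adjoint T) = 1)
    (Tdag : H2 →L[ℂ] H1) (hTdag : Tdag = adjoint T ∘L R)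
    (S : Submodule ℂ H1) (hSclosed : IsClosed (S : Set H1)) [S.HasOrthogonalProjection]
    (PS : H1 →L[ℂ] H1) (hPS : PS = S.subtypeL ∘L S.orthogonalProjectionOnto)
    (hangle : friedrichs S (LinearMap.ker (T : H1 →ₗ[ℂ] H2))ᗮ < 1) :
    (T ∘L PS ∘L Tdag) ∘L (T ∘L PS ∘L Tdag) = T ∘L PS ∘L Tdag ↔
      LinearMap.ker (T : H1 →ₗ[ℂ] H2) = (S ⊓ LinearMap.ker (T : H1 →ₗ[ℂ] H2)) ⊔ (Sᗮ ⊓ LinearMap.ker (T : H1 →ₗ[ℂ] H2)) := by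
  classical
  -- pointwise basic facts
  have hR1' : ∀ y, T (adjoint T (R y)) = y := fun y => by
    have h := ContinuousLinearMap.ext_iff.mp hR1 y
    simpa [ContinuousLinearMap.comp_apply] using h
  have hTTdag : ∀ y, T (Tdag y) = y := fun y => by
    rw [hTdag]; simpa [ContinuousLinearMap.comp_apply] using hR1' y
  set Q : H1 →L[ℂ] H1 := Tdag ∘L T with hQdef
  have hQapp : ∀ x, Q x = Tdag (T x) := fun x => rfl
  have hTQ : ∀ x, T (Q x) = T x := fun x => by rw [hQapp, hTTdag]
  have hQQ : ∀ x, Q (Q x) = Q x := fun x => by rw [hQapp, hQapp, hTTdag]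
  have hRsa : ∀ a b : H2, ⟪R a, b⟫ = ⟪a, R b⟫ := by
    intro a b
    conv_lhs => rw [← hR1' b]
    rw [← ContinuousLinearMap.adjoint_inner_left T]
    rw [ContinuousLinearMap.adjoint_inner_right T]
    rw [hR1' a]
  have hQsa : ∀ x y : H1, ⟪Q x, y⟫ = ⟪x, Q y⟫ := by
    intro x y
    rw [hQapp, hQapp, hTdag]
    simp only [ContinuousLinearMap.comp_apply]
    rw [ContinuousLinearMap.adjoint_inner_left T, hRsa,
      ← ContinuousLinearMap.adjoint_inner_right T]
  have hPapp : ∀ x, PS x = (S.orthogonalProjectionOnto x : H1) := fun x => by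
    rw [hPS]; rfl
  have hPmem : ∀ x, PS x ∈ S := fun x => by rw [hPapp]; exact (S.orthogonalProjectionOnto x).2
  have hPid : ∀ x ∈ S, PS x = x := fun x hx => by
    rw [hPapp]; exact S.starProjection_eq_self_iff.mpr hx
  have hPzero : ∀ x ∈ Sᗮ, PS x = 0 := fun x hx => by
    rw [hPapp, Submodule.orthogonalProjectionOnto_apply_of_mem_orthogonal hx]; rfl
  have hPsub : ∀ x, x - PS x ∈ Sᗮ := fun x => by
    rw [hPapp]; exact S.sub_starProjection_mem_orthogonal x
  have hPsa : ∀ x y : H1, ⟪PS x, y⟫ = ⟪x, PS y⟫ := fun x y => by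
    rw [hPapp, hPapp]; exact S.inner_starProjection_left_eq_right x y
  have hPP : ∀ x, PS (PS x) = PS x := fun x => hPid _ (hPmem x)
  -- generic lemmas about selfadjoint idempotent maps
  have hinner2 : ∀ (f : H1 → H1), (∀ x y : H1, ⟪f x, y⟫ = ⟪x, f y⟫) →
      (∀ x, f (f x) = f x) → ∀ v : H1, ⟪f v, f v⟫ = ⟪v, f v⟫ := by
    intro f hsa hid v
    rw [hsa v (f v), hid]
  have hnorm : ∀ (f : H1 → H1), (∀ x y : H1, ⟪f x, y⟫ = ⟪x, f y⟫) →
      (∀ x, f (f x) = f x) → ∀ v : H1, ‖f v‖ ≤ ‖v‖ := by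
    intro f hsa hid v
    have h2 : ‖f v‖ ^ 2 ≤ ‖v‖ * ‖f v‖ := by
      have hcs := norm_inner_le_norm (𝕜 := ℂ) v (f v)
      rwa [← hinner2 f hsa hid v, inner_self_eq_norm_sq_to_K, norm_pow,
        RCLike.norm_ofReal, abs_of_nonneg (norm_nonneg _)] at hcs
    nlinarith [norm_nonneg (f v), norm_nonneg v]
  have hfixed : ∀ (f : H1 → H1), (∀ x y : H1, ⟪f x, y⟫ = ⟪x, f y⟫) →
      (∀ x, f (f x) = f x) → ∀ v : H1, ‖f v‖ = ‖v‖ → f v = v := by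
    intro f hsa hid v hv
    have h1 : ⟪v, f v⟫ = ⟪f v, f v⟫ := (hinner2 f hsa hid v).symm
    have h2 : ⟪f v, v⟫ = ⟪f v, f v⟫ := by rw [hsa v v]; exact h1
    have h3 : ⟪v - f v, v - f v⟫ = 0 := by
      rw [inner_sub_sub_self, ← h1, h2, inner_self_eq_norm_sq_to_K,
        inner_self_eq_norm_sq_to_K, hv]
      ring
    have h4 := inner_self_eq_zero.mp h3
    rw [sub_eq_zero] at h4
    exact h4.symm
  -- adjoint shuffle
  have hshuffle : ∀ u v : H1, ⟪u, PS (Q v)⟫ = ⟪Q (PS u), v⟫ := by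
    intro u v
    rw [← hPsa, ← hQsa]
  constructor
  · -- forward direction
    intro hE
    -- pointwise version of hE
    have hE' : ∀ z : H1, T (PS (Tdag (T (PS (Tdag (T z)))))) = T (PS (Tdag (T z))) := by
      intro z
      have h := ContinuousLinearMap.ext_iff.mp hE (T z)
      simpa [ContinuousLinearMap.comp_apply] using h
    have hB : ∀ v : H1, Q (PS (Q (PS (Q v)))) = Q (PS (Q v)) := by
      intro v
      have h := congrArg Tdag (hE' v)
      simpa [hQapp] using h
    -- step 2 : PQPQ = PQ
    have hGstar : ∀ w : H1, PS (Q (PS (Q w))) = PS (Q w) := by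
      intro w
      have hQPs : Q (PS (PS (Q (PS (Q w))) - PS (Q w))) = 0 := by
        simp only [map_sub, hPP]
        rw [hB, sub_self]
      set s : H1 := PS (Q (PS (Q w))) - PS (Q w) with hs
      have h1 : ⟪s, s⟫ = 0 := by
        have e1 : ⟪s, PS (Q (PS (Q w)))⟫ = 0 := by
          rw [hshuffle s (PS (Q w))]
          have : Q (PS s) = 0 := hQPs
          rw [this, inner_zero_left]
        have e2 : ⟪s, PS (Q w)⟫ = 0 := by
          rw [hshuffle s w]
          have : Q (PS s) = 0 := hQPs
          rw [this, inner_zero_left]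
        rw [hs]
        rw [inner_sub_right, e1, e2, sub_zero]
      have h2 := inner_self_eq_zero.mp h1
      rw [hs, sub_eq_zero] at h2
      exact h2
    -- step 3 : QPQP = QP
    have hA : ∀ z : H1, Q (PS (Q (PS z))) = Q (PS z) := by
      intro z
      apply ext_inner_right ℂ
      intro w
      calc ⟪Q (PS (Q (PS z))), w⟫ = ⟪Q (PS z), PS (Q w)⟫ := (hshuffle (Q (PS z)) w).symm
        _ = ⟪z, PS (Q (PS (Q w)))⟫ := (hshuffle z (PS (Q w))).symm
        _ = ⟪z, PS (Q w)⟫ := by rw [hGstar]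
        _ = ⟪Q (PS z), w⟫ := hshuffle z w
    -- step 5 : QP = PQP
    have hstar : ∀ y : H1, Q (PS y) = PS (Q (PS y)) := by
      intro y
      set x : H1 := PS (Q (PS y)) with hx
      have hDx : PS (Q (PS x)) = x := by
        rw [hx, hPP, hA]
      have hn1 : ⟪Q (PS x), Q (PS x)⟫ = ⟪x, x⟫ := by
        calc ⟪Q (PS x), Q (PS x)⟫ = ⟪PS x, Q (Q (PS x))⟫ := hQsa _ _
          _ = ⟪PS x, Q (PS x)⟫ := by rw [hQQ]
          _ = ⟪x, PS (Q (PS x))⟫ := hPsa _ _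
          _ = ⟪x, x⟫ := by rw [hDx]
      have hn2 : ‖Q (PS x)‖ = ‖x‖ := by
        have := hn1
        rw [inner_self_eq_norm_sq_to_K, inner_self_eq_norm_sq_to_K] at this
        have h := Complex.ofReal_injective (by exact_mod_cast this : ((‖Q (PS x)‖ ^ 2 : ℝ) : ℂ) = ((‖x‖ ^ 2 : ℝ) : ℂ))
        nlinarith [norm_nonneg (Q (PS x)), norm_nonneg x]
      have hle1 : ‖Q (PS x)‖ ≤ ‖PS x‖ := hnorm Q hQsa hQQ (PS x)
      have hle2 : ‖PS x‖ ≤ ‖x‖ := hnorm PS hPsa hPP x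
      have hPnorm : ‖PS x‖ = ‖x‖ := le_antisymm hle2 (by rw [← hn2]; exact hle1)
      have hPx : PS x = x := hfixed PS hPsa hPP x hPnorm
      have hQnormx : ‖Q x‖ = ‖x‖ := by rw [← hn2, hPx]
      have hQx : Q x = x := hfixed Q hQsa hQQ x hQnormx
      have : Q (PS y) = Q (PS x) := by
        rw [hx, hPP, hA]
      rw [this, hPx, hQx]
    -- step 6 : commuting
    have hcomm : ∀ z : H1, PS (Q z) = Q (PS z) := by
      intro z
      apply ext_inner_right ℂ
      intro w
      calc ⟪PS (Q z), w⟫ = ⟪Q z, PS w⟫ := hPsa _ _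
        _ = ⟪z, Q (PS w)⟫ := hQsa _ _
        _ = ⟪z, PS (Q (PS w))⟫ := by rw [← hstar]
        _ = ⟪Q (PS z), PS w⟫ := by rw [hshuffle z (PS w)]
        _ = ⟪PS (Q (PS z)), w⟫ := (hPsa _ _).symm
        _ = ⟪Q (PS z), w⟫ := by rw [← hstar]
    -- decomposition
    apply le_antisymm
    · intro x hx
      have hx0 : T x = 0 := LinearMap.mem_ker.mp hx
      have hQx0 : Q x = 0 := by rw [hQapp, hx0, map_zero]
      have hTPx : T (PS x) = 0 := by
        rw [← hTQ (PS x), ← hcomm, hQx0, map_zero, map_zero]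
      refine Submodule.mem_sup.mpr ⟨PS x, ⟨hPmem x, LinearMap.mem_ker.mpr hTPx⟩,
        x - PS x, ⟨hPsub x, LinearMap.mem_ker.mpr ?_⟩, by abel⟩
      rw [map_sub, ContinuousLinearMap.coe_coe, hx0, hTPx, sub_zero]
    · exact sup_le inf_le_right inf_le_right
  · -- backward direction
    intro h
    have hkerP : ∀ z : H1, T z = 0 → T (PS z) = 0 := by
      intro z hz
      have hz' : z ∈ (S ⊓ LinearMap.ker (T : H1 →ₗ[ℂ] H2)) ⊔ (Sᗮ ⊓ LinearMap.ker (T : H1 →ₗ[ℂ] H2)) := by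
        rw [← h]; exact LinearMap.mem_ker.mpr hz
      obtain ⟨a, ha, b, hb, hab⟩ := Submodule.mem_sup.mp hz'
      have : PS z = a := by
        rw [← hab, map_add, hPid a ha.1, hPzero b hb.1, add_zero]
      rw [this]
      exact LinearMap.mem_ker.mp ha.2
    have hQker : ∀ z : H1, T z = 0 → Q z = 0 := fun z hz => by
      rw [hQapp, hz, map_zero]
    -- Q x ⊥ ker T
    have hrange : ∀ (x z : H1), T z = 0 → ⟪Q x, z⟫ = 0 := by
      intro x z hz
      rw [hQsa, hQker z hz, inner_zero_right]
    -- Q fixes (ker T)ᗮ-vectors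
    have hfix : ∀ w : H1, (∀ z : H1, T z = 0 → ⟪w, z⟫ = 0) → Q w = w := by
      intro w hw
      have hker : T (w - Q w) = 0 := by rw [map_sub, hTQ, sub_self]
      have h1 : ⟪w - Q w, w - Q w⟫ = 0 := by
        rw [inner_sub_left]
        have e1 : ⟪w, w - Q w⟫ = 0 := hw _ hker
        have e2 : ⟪Q w, w - Q w⟫ = 0 := by
          rw [hQsa, map_sub, hQQ, sub_self, inner_zero_right]
        rw [e1, e2, sub_zero]
      have h2 := inner_self_eq_zero.mp h1
      rw [sub_eq_zero] at h2
      exact h2.symm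
    have hcomm : ∀ x : H1, Q (PS x) = PS (Q x) := by
      intro x
      have hxdec : PS x = PS (Q x) + PS (x - Q x) := by
        have hsum : Q x + (x - Q x) = x := by abel
        rw [← map_add, hsum]
      have h2 : Q (PS (x - Q x)) = 0 := by
        apply hQker
        apply hkerP
        rw [map_sub, hTQ, sub_self]
      have h3 : Q (PS (Q x)) = PS (Q x) := by
        apply hfix
        intro z hz
        rw [hPsa]
        exact hrange x (PS z) (hkerP z hz)
      rw [hxdec, map_add, h2, add_zero, h3]
    -- conclude
    ext x
    simp only [ContinuousLinearMap.comp_apply]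
    calc T (PS (Tdag (T (PS (Tdag x)))))
        = T (PS (Q (PS (Tdag x)))) := rfl
      _ = T (PS (PS (Q (Tdag x)))) := by rw [hcomm]
      _ = T (PS (Q (Tdag x))) := by rw [hPP]
      _ = T (Q (PS (Tdag x))) := by rw [hcomm]
      _ = T (PS (Tdag x)) := hTQ _

end KreinFrames
end
end
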